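/- arXiv:math/0504003 — 8 statements merged into one kernel-verified Lean document; each statement's English description precedes it below -/
import Mathlib

section
/- In the Prüfer group ℤ(p^∞), viewed as the p-primary subgroup of ℚ/ℤ, the sequence a_n = -1/p + 1/p^n is not a T-sequence: there is no Hausdorff group topology τ on ℤ(p^∞) such that a_n → 0 in τ. -/
open Filter Topology

set_option synthInstance.maxHeartbeats 1000000

noncomputable section

/-- The Prüfer `p`-group, as the subgroup of `ℚ/ℤ` of elements of `p`-power order. -/
def Prufer (p : ℕ) : AddSubgroup (AddCircle (1 : ℚ)) where
  carrier := {x | ∃ n : ℕ, p ^ n • x = 0}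
  zero_mem' := ⟨0, smul_zero _⟩
  add_mem' := by
    rintro a b ⟨m, hm⟩ ⟨n, hn⟩
    refine ⟨m + n, ?_⟩
    have ha : p ^ (m + n) • a = 0 := by
      rw [pow_add, mul_comm, mul_smul, hm, smul_zero]
    have hb : p ^ (m + n) • b = 0 := by
      rw [pow_add, mul_smul, hn, smul_zero]
    rw [smul_add, ha, hb, add_zero]
  neg_mem' := by
    rintro a ⟨n, hn⟩
    exact ⟨n, by rw [smul_neg, hn, neg_zero]⟩

/-- The element `e_n = 1/p^n` of the Prüfer `p`-group. -/
def eP (p n : ℕ) : Prufer p :=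
  ⟨((((p : ℚ) ^ n)⁻¹ : ℚ) : AddCircle (1 : ℚ)), n, by
    rcases eq_or_ne ((p : ℚ) ^ n) 0 with h | h
    · simp [h]
    · have key : ((p ^ n : ℕ) • ((((p : ℚ) ^ n)⁻¹ : ℚ)) : ℚ) = (1 : ℚ) := by
        rw [nsmul_eq_mul]
        push_cast
        field_simp
      calc p ^ n • ((((p : ℚ) ^ n)⁻¹ : ℚ) : AddCircle (1 : ℚ))
          = (((p ^ n : ℕ) • (((p : ℚ) ^ n)⁻¹ : ℚ) : ℚ) : AddCircle (1 : ℚ)) := by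
            norm_cast
        _ = ((1 : ℚ) : AddCircle (1 : ℚ)) := by rw [key]
        _ = 0 := AddCircle.coe_period 1⟩

/-- `{a_k}` is a T-sequence: it converges to `0` in some Hausdorff group topology. -/
def IsTSeq {A : Type*} [AddCommGroup A] (a : ℕ → A) : Prop :=
  ∃ τ : TopologicalSpace A, @IsTopologicalAddGroup A τ _ ∧ @T2Space A τ ∧
    Filter.Tendsto a Filter.atTop (@nhds A τ 0)

/-- The set `A(l,m)` of sums `m₁ a_{k₁} + ⋯ + m_h a_{k_h}` with distinct indices `kᵢ ≥ m`,
nonzero integer coefficients, and `Σ|mᵢ| ≤ l`. -/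
def TSet {A : Type*} [AddCommGroup A] (a : ℕ → A) (l m : ℕ) : Set A :=
  {x | ∃ (s : Finset ℕ) (c : ℕ → ℤ), (∀ k ∈ s, m ≤ k) ∧ (∀ k ∈ s, c k ≠ 0) ∧
    (∑ k ∈ s, (c k).natAbs) ≤ l ∧ x = ∑ k ∈ s, c k • a k}

/-- `σ` is a finitely supported representation `y = Σ_{n ≥ 1} σ_n e_n`. -/
def IsRep (p : ℕ) (y : Prufer p) (σ : ℕ →₀ ℤ) : Prop :=
  σ 0 = 0 ∧ y = ∑ n ∈ σ.support, σ n • eP p n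

/-- `σ` is the canonical form of `y`: a representation with `|σ_n| ≤ (p-1)/2`. -/
def IsCanonical (p : ℕ) (y : Prufer p) (σ : ℕ →₀ ℤ) : Prop :=
  IsRep p y σ ∧ ∀ n, 2 * (σ n).natAbs ≤ p - 1

/-- The sequence `a_n = -1/p + 1/p^n` is not a T-sequence in `ℤ(p^∞)`. -/
theorem stmt0 (p : ℕ) (hp : p.Prime) (a : ℕ → Prufer p)
    (ha : ∀ n : ℕ, a n = -eP p 1 + eP p (n + 1)) :
    ¬ IsTSeq a := by
  rintro ⟨τ, hg, h2, hconv⟩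
  letI := τ; haveI := hg; haveI := h2
  have hp0 : (p : ℚ) ≠ 0 := by exact_mod_cast hp.ne_zero
  -- e₁ ≠ 0
  have he1 : eP p 1 ≠ 0 := by
    intro h
    have hval : ((((p : ℚ) ^ 1)⁻¹ : ℚ) : AddCircle (1 : ℚ)) = 0 := congrArg Subtype.val h
    rw [AddCircle.coe_eq_zero_iff] at hval
    obtain ⟨n, hn⟩ := hval
    have hn' : (n : ℚ) = ((p : ℚ))⁻¹ := by simpa using hn
    have : (n * p : ℚ) = 1 := by rw [hn', inv_mul_cancel₀ hp0]
    have hz : (n * p : ℤ) = 1 := by exact_mod_cast this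
    have : (p : ℤ) ∣ 1 := ⟨n, by linarith [hz]⟩
    have := Int.le_of_dvd one_pos this
    have := hp.two_le
    omega
  -- p • e_{n+1} = e_n
  have hsmul : ∀ n : ℕ, p • eP p (n + 1) = eP p n := by
    intro n
    apply Subtype.ext
    show p • ((((p : ℚ) ^ (n + 1))⁻¹ : ℚ) : AddCircle (1 : ℚ))
        = ((((p : ℚ) ^ n)⁻¹ : ℚ) : AddCircle (1 : ℚ))
    have : ((p • (((p : ℚ) ^ (n + 1))⁻¹ : ℚ)) : ℚ) = (((p : ℚ) ^ n)⁻¹ : ℚ) := by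
      rw [nsmul_eq_mul]
      field_simp
      ring
    rw [← this]
    norm_cast
  -- p • e₁ = 0
  have hsmul1 : p • eP p 1 = 0 := by
    apply Subtype.ext
    show p • ((((p : ℚ) ^ 1)⁻¹ : ℚ) : AddCircle (1 : ℚ)) = 0
    have : ((p • (((p : ℚ) ^ 1)⁻¹ : ℚ)) : ℚ) = (1 : ℚ) := by
      rw [nsmul_eq_mul]; field_simp
    calc p • ((((p : ℚ) ^ 1)⁻¹ : ℚ) : AddCircle (1 : ℚ))
        = (((p • (((p : ℚ) ^ 1)⁻¹ : ℚ)) : ℚ) : AddCircle (1 : ℚ)) := by norm_cast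
      _ = ((1 : ℚ) : AddCircle (1 : ℚ)) := by rw [this]
      _ = 0 := AddCircle.coe_period 1
  -- p • a n = e_n
  have key : ∀ n : ℕ, p • a n = eP p n := by
    intro n
    rw [ha n, smul_add, smul_neg, hsmul1, hsmul, neg_zero, zero_add]
  -- e_n → 0
  have hm : ∀ m : ℕ, Tendsto (fun n => m • a n) atTop (nhds 0) := by
    intro m
    induction m with
    | zero => simp only [zero_smul]; exact tendsto_const_nhds
    | succ k ih =>
      have := ih.add hconv
      simp only [add_zero] at this
      refine this.congr fun n => ?_
      rw [succ_nsmul]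
  have h1 : Tendsto (fun n => eP p n) atTop (nhds 0) := by
    simpa [key] using hm p
  -- e_{n+1} → 0
  have h2' : Tendsto (fun n => eP p (n + 1)) atTop (nhds 0) :=
    h1.comp (tendsto_add_atTop_nat 1)
  -- e_{n+1} = a n + e₁ → e₁
  have h3 : Tendsto (fun n => eP p (n + 1)) atTop (nhds (eP p 1)) := by
    have := hconv.add_const (eP p 1)
    rw [zero_add] at this
    refine this.congr fun n => ?_
    rw [ha n]; abel
  exact he1 (tendsto_nhds_unique h3 h2')
end
end

section
/- Let A be an abelian group and {a_k} a sequence in A with each a_k of finite order t_k. If the quantities t_k / gcd(t_k, lcm(t_1, …, t_{k-1})) tend to infinity as k → ∞, then {a_k} is a T-sequence in A. -/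
open Filter Topology Pointwise

noncomputable section

namespace Stmt2Aux

open Finset

variable {A : Type*} [AddCommGroup A]

/-- Basic building block: `0`, `a n` or `-a n` for some `n ≥ m`. -/
def SB (a : ℕ → A) (m : ℕ) : Set A :=
  {x | x = 0 ∨ ∃ n, m ≤ n ∧ (x = a n ∨ x = -a n)}

/-- Sums of elements of `SB a (m 0), SB a (m 1), …`. -/
def W (a : ℕ → A) (m : ℕ → ℕ) : Set A :=
  {x | ∃ (k : ℕ) (f : ℕ → A), (∀ i < k, f i ∈ SB a (m i)) ∧ x = ∑ i ∈ Finset.range k, f i}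

lemma zero_mem_SB (a : ℕ → A) (m : ℕ) : (0 : A) ∈ SB a m := Or.inl rfl

lemma SB_anti (a : ℕ → A) {m m' : ℕ} (hm : m ≤ m') : SB a m' ⊆ SB a m := by
  rintro x (rfl | ⟨n, hn, hx⟩)
  · exact Or.inl rfl
  · exact Or.inr ⟨n, le_trans hm hn, hx⟩

lemma zero_mem_W (a : ℕ → A) (m : ℕ → ℕ) : (0 : A) ∈ W a m :=
  ⟨0, fun _ => 0, by simp⟩

lemma W_anti (a : ℕ → A) {m m' : ℕ → ℕ} (hm : ∀ i, m i ≤ m' i) : W a m' ⊆ W a m := by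
  rintro x ⟨k, f, hf, rfl⟩
  exact ⟨k, f, fun i hi => SB_anti a (hm i) (hf i hi), rfl⟩

lemma neg_mem_W (a : ℕ → A) (m : ℕ → ℕ) {x : A} (hx : x ∈ W a m) : -x ∈ W a m := by
  obtain ⟨k, f, hf, rfl⟩ := hx
  refine ⟨k, fun i => -(f i), fun i hi => ?_, by rw [← Finset.sum_neg_distrib]⟩
  rcases hf i hi with h0 | ⟨n, hn, h | h⟩
  · exact Or.inl (by simp [h0])
  · exact Or.inr ⟨n, hn, Or.inr (by simp [h])⟩
  · exact Or.inr ⟨n, hn, Or.inl (by simp [h])⟩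

lemma a_mem_W (a : ℕ → A) (m : ℕ → ℕ) {k : ℕ} (hk : m 0 ≤ k) : a k ∈ W a m := by
  refine ⟨1, fun _ => a k, fun i hi => ?_, by simp⟩
  have : i = 0 := Nat.lt_one_iff.mp hi
  subst this
  exact Or.inr ⟨k, hk, Or.inl rfl⟩

lemma sum_interleave (F G : ℕ → A) (K : ℕ) :
    ∑ i ∈ Finset.range (2 * K), (if i % 2 = 0 then F (i / 2) else G (i / 2)) =
      ∑ i ∈ Finset.range K, F i + ∑ i ∈ Finset.range K, G i := by
  induction K with
  | zero => simp
  | succ n ih =>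
    have h2 : 2 * (n + 1) = (2 * n + 1) + 1 := by ring
    rw [h2, Finset.sum_range_succ, Finset.sum_range_succ, Finset.sum_range_succ,
      Finset.sum_range_succ, ih]
    have e1 : (2 * n) % 2 = 0 := by omega
    have e2 : ¬((2 * n + 1) % 2 = 0) := by omega
    have e3 : (2 * n) / 2 = n := by omega
    have e4 : (2 * n + 1) / 2 = n := by omega
    rw [if_pos e1, if_neg e2, e3, e4]
    abel

lemma W_add (a : ℕ → A) (m : ℕ → ℕ) (hm : Monotone m) :
    W a (fun i => m (2 * i + 1)) + W a (fun i => m (2 * i + 1)) ⊆ W a m := by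
  rintro z ⟨x, hx, y, hy, rfl⟩
  obtain ⟨k, f, hf, rfl⟩ := hx
  obtain ⟨j, g, hg, rfl⟩ := hy
  classical
  set K := max k j with hK
  set F : ℕ → A := fun i => if i < k then f i else 0 with hFdef
  set G : ℕ → A := fun i => if i < j then g i else 0 with hGdef
  have hFS : ∀ i, F i ∈ SB a (m (2 * i + 1)) := by
    intro i
    by_cases hi : i < k
    · simpa [hFdef, hi] using hf i hi
    · simpa [hFdef, hi] using zero_mem_SB a _
  have hGS : ∀ i, G i ∈ SB a (m (2 * i + 1)) := by
    intro i
    by_cases hi : i < j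
    · simpa [hGdef, hi] using hg i hi
    · simpa [hGdef, hi] using zero_mem_SB a _
  have hFx : ∑ i ∈ Finset.range K, F i = ∑ i ∈ Finset.range k, f i := by
    rw [← Finset.sum_subset (Finset.range_subset_range.mpr (le_max_left k j))
      (fun i _ hi => if_neg (fun h => hi (Finset.mem_range.mpr h)))]
    exact Finset.sum_congr rfl fun i hi => if_pos (Finset.mem_range.mp hi)
  have hGy : ∑ i ∈ Finset.range K, G i = ∑ i ∈ Finset.range j, g i := by
    rw [← Finset.sum_subset (Finset.range_subset_range.mpr (le_max_right k j))
      (fun i _ hi => if_neg (fun h => hi (Finset.mem_range.mpr h)))]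
    exact Finset.sum_congr rfl fun i hi => if_pos (Finset.mem_range.mp hi)
  refine ⟨2 * K, fun i => if i % 2 = 0 then F (i / 2) else G (i / 2), fun i hi => ?_, ?_⟩
  · show (if i % 2 = 0 then F (i / 2) else G (i / 2)) ∈ SB a (m i)
    by_cases he : i % 2 = 0
    · rw [if_pos he]
      have h1 : i = 2 * (i / 2) := by omega
      refine SB_anti a ?_ (hFS (i / 2))
      exact hm (by omega)
    · rw [if_neg he]
      have h1 : i = 2 * (i / 2) + 1 := by omega
      have := hGS (i / 2)
      rwa [← h1] at this
  · rw [sum_interleave, hFx, hGy]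



lemma natAbs_sum_le' (s : Finset ℕ) (f : ℕ → ℤ) :
    (∑ i ∈ s, f i).natAbs ≤ ∑ i ∈ s, (f i).natAbs := by
  classical
  induction s using Finset.induction with
  | empty => simp
  | insert _ _ h ih =>
    rw [Finset.sum_insert h, Finset.sum_insert h]
    exact le_trans (Int.natAbs_add_le _ _) (by omega)

lemma extract {a : ℕ → A} {m : ℕ → ℕ} {x : A} (hx : x ∈ W a m) :
    x = 0 ∨ ∃ (J : Finset ℕ) (c : ℕ → ℤ) (i : ℕ) (hJ : J.Nonempty),
      (∀ q ∈ J, c q ≠ 0) ∧ (∑ q ∈ J, (c q).natAbs) ≤ i + 1 ∧ m i ≤ J.max' hJ ∧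
      x = ∑ q ∈ J, c q • a q := by
  classical
  obtain ⟨k, f, hf, rfl⟩ := hx
  set F := (Finset.range k).filter (fun i => f i ≠ 0) with hF
  have hchoice : ∀ i : ℕ, ∃ (e : ℤ) (q : ℕ), e.natAbs = 1 ∧ m i ≤ q ∧
      (i ∈ F → f i = e • a q) := by
    intro i
    by_cases hi : i ∈ F
    · obtain ⟨hir, hine⟩ := Finset.mem_filter.mp hi
      rcases hf i (Finset.mem_range.mp hir) with h0 | ⟨q, hq, h | h⟩
      · exact absurd h0 hine
      · exact ⟨1, q, by decide, hq, fun _ => by rw [h, one_smul]⟩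
      · exact ⟨-1, q, by decide, hq, fun _ => by rw [h, neg_smul, one_smul]⟩
    · exact ⟨1, m i, by decide, le_rfl, fun hmem => absurd hmem hi⟩
  choose ε n hε hn hfe using hchoice
  set T := F.image n with hT
  set c : ℕ → ℤ := fun q => ∑ i ∈ F.filter (fun i => n i = q), ε i with hc
  have hxT : ∑ i ∈ Finset.range k, f i = ∑ q ∈ T, c q • a q := by
    rw [← Finset.sum_filter_ne_zero (Finset.range k) (f := f), ← hF]
    rw [Finset.sum_congr rfl (fun i hi => hfe i hi)]
    rw [← Finset.sum_fiberwise_of_maps_to (g := n) (fun i hi => Finset.mem_image_of_mem n hi)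
      (fun i => ε i • a (n i))]
    refine Finset.sum_congr rfl fun q _ => ?_
    rw [hc, Finset.sum_smul]
    refine Finset.sum_congr rfl fun i hi => ?_
    rw [(Finset.mem_filter.mp hi).2]
  set J := T.filter (fun q => c q ≠ 0) with hJdef
  have hxJ : ∑ i ∈ Finset.range k, f i = ∑ q ∈ J, c q • a q := by
    rw [hxT]
    refine (Finset.sum_filter_of_ne fun q _ hne => ?_).symm
    intro hc0
    exact hne (by rw [hc0, zero_smul])
  rcases Finset.eq_empty_or_nonempty J with hJe | hJne
  · left
    rw [hxJ, hJe, Finset.sum_empty]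
  right
  set j := J.max' hJne with hj
  set F' := F.filter (fun i => n i ∈ J) with hF'
  have hF'ne : F'.Nonempty := by
    have hjT : j ∈ T := (Finset.mem_filter.mp (J.max'_mem hJne)).1
    obtain ⟨i, hiF, hni⟩ := Finset.mem_image.mp hjT
    exact ⟨i, Finset.mem_filter.mpr ⟨hiF, by rw [hni]; exact J.max'_mem hJne⟩⟩
  set i0 := F'.max' hF'ne with hi0
  have hcard : F'.card ≤ i0 + 1 := by
    have hsub : F' ⊆ Finset.range (i0 + 1) := fun i hi =>
      Finset.mem_range.mpr (Nat.lt_succ_of_le (F'.le_max' i hi))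
    calc F'.card ≤ (Finset.range (i0 + 1)).card := Finset.card_le_card hsub
    _ = i0 + 1 := Finset.card_range _
  have h1 : ∀ q ∈ J, (c q).natAbs ≤ (F.filter (fun i => n i = q)).card := by
    intro q _
    calc (c q).natAbs ≤ ∑ i ∈ F.filter (fun i => n i = q), (ε i).natAbs :=
          natAbs_sum_le' _ _
    _ = ∑ _i ∈ F.filter (fun i => n i = q), 1 :=
          Finset.sum_congr rfl fun i _ => hε i
    _ = (F.filter (fun i => n i = q)).card := (Finset.card_eq_sum_ones _).symm
  have h2 : F'.card = ∑ q ∈ J, (F.filter (fun i => n i = q)).card := by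
    rw [Finset.card_eq_sum_card_fiberwise (f := n) (s := F') (t := J)
      (fun i hi => (Finset.mem_filter.mp hi).2)]
    refine Finset.sum_congr rfl fun q hq => ?_
    congr 1
    rw [Finset.filter_filter]
    ext i
    simp only [Finset.mem_filter]
    constructor
    · rintro ⟨hiF, _, hniq⟩
      exact ⟨hiF, hniq⟩
    · rintro ⟨hiF, hniq⟩
      exact ⟨hiF, hniq ▸ hq, hniq⟩
  have hsumabs : ∑ q ∈ J, (c q).natAbs ≤ i0 + 1 := by
    calc ∑ q ∈ J, (c q).natAbs ≤ ∑ q ∈ J, (F.filter (fun i => n i = q)).card :=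
          Finset.sum_le_sum h1
    _ = F'.card := h2.symm
    _ ≤ i0 + 1 := hcard
  have hmj : m i0 ≤ j := by
    have hi0F' : i0 ∈ F' := F'.max'_mem hF'ne
    have hni0 : n i0 ∈ J := (Finset.mem_filter.mp hi0F').2
    exact le_trans (hn i0) (J.le_max' _ hni0)
  exact ⟨J, c, i0, hJne, fun q hq => (Finset.mem_filter.mp hq).2, hsumabs, hmj, hxJ⟩

lemma nt_step {T L r c : ℕ} (hT : 0 < T) (hdvd : T ∣ r * L * c) (hc : 0 < c) (hr : 0 < r) :
    T / Nat.gcd T L ≤ r * c := by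
  set g0 := Nat.gcd T L with hg0
  have hg0pos : 0 < g0 := Nat.gcd_pos_of_pos_left _ hT
  have hTg : g0 ∣ T := Nat.gcd_dvd_left _ _
  have hLg : g0 ∣ L := Nat.gcd_dvd_right _ _
  have cop : Nat.Coprime (T / g0) (L / g0) := Nat.coprime_div_gcd_div_gcd hg0pos
  have hrearr : r * L * c = g0 * ((L / g0) * (r * c)) := by
    conv_lhs => rw [← Nat.div_mul_cancel hLg]
    ring
  have h2 : g0 * (T / g0) ∣ g0 * ((L / g0) * (r * c)) := by
    rw [Nat.mul_div_cancel' hTg, ← hrearr]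
    exact hdvd
  have h1 : T / g0 ∣ (L / g0) * (r * c) := (Nat.mul_dvd_mul_iff_left hg0pos).mp h2
  have h3 : T / g0 ∣ r * c := Nat.Coprime.dvd_of_dvd_mul_left cop h1
  exact Nat.le_of_dvd (by positivity) h3

lemma smul_a_eq_zero {a : ℕ → A} {t : ℕ → ℕ} (ht : ∀ k, t k = addOrderOf (a k))
    {q : ℕ} {z : ℤ} (hdvd : (t q : ℤ) ∣ z) : z • a q = 0 :=
  addOrderOf_dvd_iff_zsmul_eq_zero.mp (by rw [← ht q]; exact hdvd)

/-- The key separation property: `g ∉ W a m` when `m` grows fast enough. -/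
lemma key_not_mem (a : ℕ → A) (t : ℕ → ℕ) (ht : ∀ k, t k = addOrderOf (a k))
    (hfin : ∀ k, 0 < t k) (m : ℕ → ℕ) (g : A) (hg : g ≠ 0)
    (hd : ∀ i k, m i ≤ k →
      addOrderOf g * (i + 1) < t k / Nat.gcd (t k) ((Finset.range k).lcm t)) :
    g ∉ W a m := by
  intro hgW
  rcases extract hgW with rfl | ⟨J, c, i, hJ, hc, hl, hmi, hsum⟩
  · exact hg rfl
  set r := addOrderOf g with hr
  set j := J.max' hJ with hjdef
  have hjJ : j ∈ J := J.max'_mem hJ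
  by_cases hr0 : r = 0
  · set N := ∏ q ∈ J, t q with hN
    have hNpos : 0 < N := Finset.prod_pos fun q _ => hfin q
    have hNg : N • g = 0 := by
      rw [hsum, Finset.smul_sum]
      refine Finset.sum_eq_zero fun q hq => ?_
      have hconv : N • (c q • a q) = ((N : ℤ) * c q) • a q := by
        rw [← natCast_zsmul, smul_smul]
      rw [hconv]
      refine smul_a_eq_zero ht ?_
      exact Dvd.dvd.mul_right (Int.natCast_dvd_natCast.mpr (Finset.dvd_prod_of_mem t hq)) _
    have hfo : IsOfFinAddOrder g := isOfFinAddOrder_iff_nsmul_eq_zero.mpr ⟨N, hNpos, hNg⟩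
    exact absurd hr0 (by rw [hr]; exact hfo.addOrderOf_pos.ne')
  · have hrpos : 0 < r := Nat.pos_of_ne_zero hr0
    set L := (Finset.range j).lcm t with hL
    have hkey : ((r * L : ℕ) : ℤ) • g = ∑ q ∈ J, (((r * L : ℕ) : ℤ) * c q) • a q := by
      rw [hsum, Finset.smul_sum]
      exact Finset.sum_congr rfl fun q _ => smul_smul _ _ _
    have hzero : ((r * L : ℕ) : ℤ) • g = 0 := by
      rw [natCast_zsmul, mul_comm, mul_smul]
      have hrg : r • g = 0 := addOrderOf_nsmul_eq_zero g
      rw [hrg, smul_zero]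
    have hsingle : ∑ q ∈ J, (((r * L : ℕ) : ℤ) * c q) • a q =
        (((r * L : ℕ) : ℤ) * c j) • a j := by
      refine Finset.sum_eq_single j (fun q hq hqj => ?_) (fun h => absurd hjJ h)
      have hqlt : q < j := lt_of_le_of_ne (J.le_max' q hq) hqj
      refine smul_a_eq_zero ht ?_
      have h1 : (t q : ℤ) ∣ (L : ℤ) :=
        Int.natCast_dvd_natCast.mpr (Finset.dvd_lcm (Finset.mem_range.mpr hqlt))
      refine h1.trans ?_
      refine ⟨(r : ℤ) * c q, ?_⟩
      push_cast
      ring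
    have hdvdj : (t j : ℤ) ∣ ((r * L : ℕ) : ℤ) * c j := by
      rw [ht j, addOrderOf_dvd_iff_zsmul_eq_zero]
      rw [← hsingle, ← hkey, hzero]
    have hdvdn : t j ∣ r * L * (c j).natAbs := by
      have h2 := Int.natAbs_dvd_natAbs.mpr hdvdj
      rwa [Int.natAbs_natCast, Int.natAbs_mul, Int.natAbs_natCast] at h2
    have hcj : (c j).natAbs ≠ 0 := fun h0 => hc j hjJ (Int.natAbs_eq_zero.mp h0)
    have hle : t j / Nat.gcd (t j) L ≤ r * (c j).natAbs :=
      nt_step (hfin j) hdvdn (Nat.pos_of_ne_zero hcj) hrpos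
    have hcjle : (c j).natAbs ≤ i + 1 := by
      refine le_trans ?_ hl
      exact Finset.single_le_sum (f := fun q => (c q).natAbs) (fun q _ => Nat.zero_le _) hjJ
    have hlt : r * (i + 1) < t j / Nat.gcd (t j) L := hd i j hmi
    have hle2 : t j / Nat.gcd (t j) L ≤ r * (i + 1) :=
      le_trans hle (Nat.mul_le_mul_left r hcjle)
    omega

end Stmt2Aux


/-- If `t_k / gcd(t_k, lcm(t_1, …, t_{k-1})) → ∞` then `{a_k}` is a T-sequence. -/
theorem stmt2 {A : Type*} [AddCommGroup A] (a : ℕ → A) (t : ℕ → ℕ)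
    (ht : ∀ k, t k = addOrderOf (a k)) (hfin : ∀ k, 0 < t k)
    (h : Filter.Tendsto (fun k => t k / Nat.gcd (t k) ((Finset.range k).lcm t))
      Filter.atTop Filter.atTop) :
    IsTSeq a := by
  classical
  set S : Set (Set A) := {U | ∃ m : ℕ → ℕ, Monotone m ∧ U = Stmt2Aux.W a m} with hS
  have hne : S.Nonempty := ⟨Stmt2Aux.W a (fun _ => 0), fun _ => 0, monotone_const, rfl⟩
  have hinter : ∀ x y, x ∈ S → y ∈ S → ∃ z ∈ S, z ⊆ x ∩ y := by
    rintro U V ⟨m1, hm1, rfl⟩ ⟨m2, hm2, rfl⟩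
    refine ⟨Stmt2Aux.W a (fun i => max (m1 i) (m2 i)),
      ⟨fun i => max (m1 i) (m2 i), hm1.max hm2, rfl⟩, Set.subset_inter ?_ ?_⟩
    · exact Stmt2Aux.W_anti a fun i => le_max_left _ _
    · exact Stmt2Aux.W_anti a fun i => le_max_right _ _
  have hzero : ∀ U ∈ S, (0 : A) ∈ U := by
    rintro U ⟨m, hm, rfl⟩
    exact Stmt2Aux.zero_mem_W a m
  have hadd : ∀ U ∈ S, ∃ V ∈ S, V + V ⊆ U := by
    rintro U ⟨m, hm, rfl⟩
    exact ⟨Stmt2Aux.W a (fun i => m (2 * i + 1)),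
      ⟨fun i => m (2 * i + 1), hm.comp fun x y hxy => by omega, rfl⟩,
      Stmt2Aux.W_add a m hm⟩
  have hneg : ∀ U ∈ S, ∃ V ∈ S, V ⊆ (fun x => -x) ⁻¹' U := by
    rintro U ⟨m, hm, rfl⟩
    exact ⟨Stmt2Aux.W a m, ⟨m, hm, rfl⟩, fun x hx => Stmt2Aux.neg_mem_W a m hx⟩
  let B : AddGroupFilterBasis A := addGroupFilterBasisOfComm S hne hinter hzero hadd hneg
  have hmemB : ∀ (m : ℕ → ℕ), Monotone m → Stmt2Aux.W a m ∈ B := by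
    intro m hm
    exact ⟨m, hm, rfl⟩
  refine ⟨B.topology, B.isTopologicalAddGroup, ?_, ?_⟩
  · letI := B.topology
    haveI : IsTopologicalAddGroup A := B.isTopologicalAddGroup
    refine IsTopologicalAddGroup.t2Space_of_zero_sep fun g hg => ?_
    have hhh : ∀ i : ℕ, ∃ N, ∀ k ≥ N,
        addOrderOf g * (i + 1) + 1 ≤ t k / Nat.gcd (t k) ((Finset.range k).lcm t) :=
      fun i => Filter.tendsto_atTop_atTop.mp h (addOrderOf g * (i + 1) + 1)
    choose N hN using hhh
    set m : ℕ → ℕ := fun i => (Finset.range (i + 1)).sup N with hm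
    have hmono : Monotone m := fun x y hxy =>
      Finset.sup_mono (Finset.range_subset_range.mpr (by omega))
    have hdprop : ∀ i k, m i ≤ k →
        addOrderOf g * (i + 1) < t k / Nat.gcd (t k) ((Finset.range k).lcm t) := by
      intro i k hk
      have h1 : N i ≤ m i := Finset.le_sup (Finset.mem_range.mpr (Nat.lt_succ_self i))
      have h2 := hN i k (le_trans h1 hk)
      omega
    exact ⟨Stmt2Aux.W a m, B.mem_nhds_zero (hmemB m hmono),
      Stmt2Aux.key_not_mem a t ht hfin m g hg hdprop⟩
  · rw [B.nhds_zero_hasBasis.tendsto_right_iff]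
    rintro U ⟨m, hm, rfl⟩
    filter_upwards [Filter.eventually_ge_atTop (m 0)] with k hk
    exact Stmt2Aux.a_mem_W a m hk

end
end

section
/- Let A be an abelian group and {a_k} a sequence in A such that each a_k has finite order t_k and the t_k are pairwise coprime with t_k → ∞. Then {a_k} is a T-sequence in A. -/
open Filter Topology

noncomputable section

/-- The rational circle with the discrete topology, used as a target for characters. -/
def TDisc : Type := AddCircle (1 : ℚ)

instance : AddCommGroup TDisc := inferInstanceAs (AddCommGroup (AddCircle (1 : ℚ)))
instance : TopologicalSpace TDisc := ⊥
instance : DiscreteTopology TDisc := ⟨rfl⟩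
instance : IsTopologicalAddGroup TDisc where
  continuous_add := continuous_of_discreteTopology
  continuous_neg := continuous_of_discreteTopology

/-- Elements of pairwise coprime orders are independent: in any vanishing integer combination
every single term vanishes. -/
lemma indep_of_coprime_orders {A : Type*} [AddCommGroup A] (a : ℕ → A) (t : ℕ → ℕ)
    (ht : ∀ k, t k = addOrderOf (a k))
    (hcop : ∀ i j, i ≠ j → Nat.Coprime (t i) (t j))
    (s : Finset ℕ) (d : ℕ → ℤ) (h : ∑ k ∈ s, d k • a k = 0) :
    ∀ k ∈ s, d k • a k = 0 := by
  intro k hk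
  set m := ∏ j ∈ s.erase k, t j with hm
  have hta : ∀ j, t j • a j = 0 := fun j => by
    rw [ht]; exact addOrderOf_nsmul_eq_zero (a j)
  have h2 : t k • (d k • a k) = 0 := by
    rw [smul_comm, hta, smul_zero]
  have h1 : m • (d k • a k) = 0 := by
    have hsum : ∑ j ∈ s, m • (d j • a j) = 0 := by
      rw [← Finset.smul_sum, h, smul_zero]
    have hz : ∀ j ∈ s.erase k, m • (d j • a j) = 0 := by
      intro j hj
      obtain ⟨e, he⟩ : t j ∣ m := Finset.dvd_prod_of_mem _ hj
      rw [smul_comm, he, mul_comm, mul_smul, hta, smul_zero, smul_zero]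
    rw [← Finset.add_sum_erase _ _ hk, Finset.sum_eq_zero hz, add_zero] at hsum
    exact hsum
  have hco : Nat.Coprime m (t k) :=
    Nat.coprime_prod_left_iff.mpr fun j hj => hcop j k (Finset.ne_of_mem_erase hj)
  have d1 : addOrderOf (d k • a k) ∣ m := addOrderOf_dvd_of_nsmul_eq_zero h1
  have d2 : addOrderOf (d k • a k) ∣ t k := addOrderOf_dvd_of_nsmul_eq_zero h2
  have hdvd : addOrderOf (d k • a k) ∣ Nat.gcd m (t k) := Nat.dvd_gcd d1 d2
  rw [Nat.Coprime] at hco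
  rw [hco, Nat.dvd_one, AddMonoid.addOrderOf_eq_one_iff] at hdvd
  exact hdvd

/-- A member of the subgroup generated by the tail `{a_k : k ≥ N}` is a finite integer
combination of those elements. -/
lemma rep_of_mem_closure {A : Type*} [AddCommGroup A] (a : ℕ → A) (N : ℕ) (x : A)
    (hx : x ∈ AddSubgroup.closure (a '' Set.Ici N)) :
    ∃ (s : Finset ℕ) (c : ℕ → ℤ), (∀ k ∈ s, N ≤ k) ∧ x = ∑ k ∈ s, c k • a k := by
  classical
  refine AddSubgroup.closure_induction
    (p := fun y _ => ∃ (s : Finset ℕ) (c : ℕ → ℤ),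
      (∀ k ∈ s, N ≤ k) ∧ y = ∑ k ∈ s, c k • a k) ?_ ?_ ?_ ?_ hx
  · rintro y ⟨k, hk, rfl⟩
    exact ⟨{k}, fun _ => 1, fun j hj => by
      rw [Finset.mem_singleton] at hj; exact hj ▸ hk, by simp⟩
  · exact ⟨∅, fun _ => 0, by simp, by simp⟩
  · rintro x y hxm hym ⟨s1, c1, hb1, e1⟩ ⟨s2, c2, hb2, e2⟩
    refine ⟨s1 ∪ s2,
      fun k => (if k ∈ s1 then c1 k else 0) + (if k ∈ s2 then c2 k else 0), ?_, ?_⟩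
    · intro k hk
      rcases Finset.mem_union.1 hk with hk | hk
      · exact hb1 k hk
      · exact hb2 k hk
    · simp only [add_smul, ite_smul, zero_smul, Finset.sum_add_distrib]
      rw [Finset.sum_ite_mem, Finset.sum_ite_mem, Finset.union_inter_cancel_left,
        Finset.union_inter_cancel_right, ← e1, ← e2]
  · rintro x hxm ⟨s, c, hb, e⟩
    exact ⟨s, fun k => -(c k), hb, by
      rw [e, ← Finset.sum_neg_distrib]
      exact Finset.sum_congr rfl fun k _ => (neg_smul _ _).symm⟩

/-- If the orders `t_k` are pairwise coprime and `t_k → ∞`, then `{a_k}` is a T-sequence. -/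
theorem stmt3 {A : Type*} [AddCommGroup A] (a : ℕ → A) (t : ℕ → ℕ)
    (ht : ∀ k, t k = addOrderOf (a k)) (hfin : ∀ k, 0 < t k)
    (hcop : ∀ i j, i ≠ j → Nat.Coprime (t i) (t j))
    (htend : Filter.Tendsto t Filter.atTop Filter.atTop) :
    IsTSeq a := by
  classical
  set C : ℕ → AddSubgroup A := fun N => AddSubgroup.closure (a '' Set.Ici N) with hC
  -- separation: any nonzero element is detected by a character vanishing on a tail of `a`
  have key : ∀ x : A, x ≠ 0 → ∃ f : A →+ TDisc,
      (∀ᶠ k in atTop, f (a k) = 0) ∧ f x ≠ 0 := by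
    intro x hx
    have hN : ∃ N, x ∉ C N := by
      by_contra hcon
      push_neg at hcon
      apply hx
      obtain ⟨s, c, _, he⟩ := rep_of_mem_closure a 0 x (hcon 0)
      set N := s.sup id + 1 with hNdef
      obtain ⟨s', c', hs', he'⟩ := rep_of_mem_closure a N x (hcon N)
      have hdisj : Disjoint s s' := by
        rw [Finset.disjoint_left]
        intro k hk hk'
        have h1 := hs' k hk'
        have h2 : k ≤ s.sup id := Finset.le_sup (f := id) hk
        omega
      set d : ℕ → ℤ := fun k =>
        (if k ∈ s then c k else 0) - (if k ∈ s' then c' k else 0) with hd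
      have hrel : ∑ k ∈ s ∪ s', d k • a k = 0 := by
        simp only [hd, sub_smul, ite_smul, zero_smul, Finset.sum_sub_distrib]
        rw [Finset.sum_ite_mem, Finset.sum_ite_mem, Finset.union_inter_cancel_left,
          Finset.union_inter_cancel_right, ← he, ← he', sub_self]
      have hterm := indep_of_coprime_orders a t ht hcop (s ∪ s') d hrel
      rw [he]
      refine Finset.sum_eq_zero fun k hk => ?_
      have hk' : k ∉ s' := Finset.disjoint_left.1 hdisj hk
      have h0 := hterm k (Finset.mem_union_left _ hk)
      simpa [hd, hk, hk'] using h0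
    obtain ⟨N, hxN⟩ := hN
    have hq : (QuotientAddGroup.mk x : A ⧸ C N) ≠ 0 := by
      simpa [QuotientAddGroup.eq_zero_iff] using hxN
    obtain ⟨χ, hχ⟩ := CharacterModule.exists_character_apply_ne_zero_of_ne_zero hq
    refine ⟨{ toFun := fun y => χ (QuotientAddGroup.mk y)
              map_zero' := by exact map_zero χ
              map_add' := fun y z => by exact map_add χ (QuotientAddGroup.mk y) (QuotientAddGroup.mk z) }, ?_, hχ⟩
    filter_upwards [eventually_ge_atTop N] with k hk
    have hmem : a k ∈ C N := AddSubgroup.subset_closure ⟨k, hk, rfl⟩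
    show χ (QuotientAddGroup.mk (a k)) = 0
    rw [(QuotientAddGroup.eq_zero_iff _).2 hmem, map_zero]
  -- build the topology: initial topology from all such characters
  let I := {f : A →+ TDisc // ∀ᶠ k in atTop, f (a k) = 0}
  let F : A →+ (I → TDisc) :=
    { toFun := fun x i => (i : { f : A →+ TDisc // ∀ᶠ k in atTop, f (a k) = 0 }).1 x
      map_zero' := by funext i; exact map_zero _
      map_add' := fun x y => by funext i; exact map_add _ _ _ }
  have hinj : Function.Injective F := by
    intro x y hxy
    by_contra hne
    have hz : x - y ≠ 0 := sub_ne_zero.2 hne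
    obtain ⟨f, hf, hfx⟩ := key _ hz
    apply hfx
    have hfeq : f x = f y := congrFun hxy (⟨f, hf⟩ : I)
    rw [map_sub, hfeq, sub_self]
  refine ⟨TopologicalSpace.induced F inferInstance, ?_, ?_, ?_⟩
  · exact topologicalAddGroup_induced F
  · letI := TopologicalSpace.induced (⇑F) (inferInstance : TopologicalSpace (I → TDisc))
    exact Topology.IsEmbedding.t2Space (f := ⇑F) ⟨⟨rfl⟩, hinj⟩
  · have hn : @nhds A (TopologicalSpace.induced (⇑F) inferInstance) 0
        = Filter.comap F (nhds (F 0)) := nhds_induced _ _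
    rw [hn, tendsto_comap_iff, map_zero F, tendsto_pi_nhds]
    intro i
    have hev : ∀ᶠ k in atTop, (F (a k)) i = 0 := i.2
    have h0 : Tendsto (fun _ : ℕ => (0 : TDisc)) atTop (nhds ((0 : I → TDisc) i)) :=
      tendsto_const_nhds
    exact h0.congr' (by filter_upwards [hev] with k hk using hk.symm)
end
end

section
/- Let A be an abelian group and {a_k} a sequence in A with each a_k of finite order t_k, such that t_k divides t_{k+1} for all k and t_{k+1}/t_k → ∞. Then {a_k} is a T-sequence in A. -/
open Filter Topology

noncomputable section

namespace TSeqAux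
local notation "𝕋" => AddCircle (1 : ℝ)
variable {A : Type*} [AddCommGroup A]

/-- One-step extension of a character along adjoining a single element. -/
lemma step (B : AddSubgroup A) (f : B →+ 𝕋) (x : A) (θ : 𝕋)
    (hcomp : ∀ c : ℤ, ∀ h : c • x ∈ B, f ⟨c • x, h⟩ = c • θ) :
    ∃ f' : ↥(B ⊔ AddSubgroup.zmultiples x) →+ 𝕋,
      (∀ y (hy : y ∈ B), f' ⟨y, AddSubgroup.mem_sup_left hy⟩ = f ⟨y, hy⟩) ∧
      f' ⟨x, AddSubgroup.mem_sup_right (AddSubgroup.mem_zmultiples x)⟩ = θ := by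
  classical
  -- the surjection B × ℤ → B ⊔ zmultiples x
  set S := B ⊔ AddSubgroup.zmultiples x with hS
  have hmem : ∀ p : B × ℤ, (p.1 : A) + p.2 • x ∈ S := fun p =>
    add_mem (AddSubgroup.mem_sup_left p.1.2)
      (AddSubgroup.mem_sup_right (zsmul_mem (AddSubgroup.mem_zmultiples x) p.2))
  let φ : B × ℤ →+ S :=
    { toFun := fun p => ⟨(p.1 : A) + p.2 • x, hmem p⟩
      map_zero' := by ext; simp
      map_add' := by
        rintro ⟨b, c⟩ ⟨b', c'⟩
        ext
        push_cast
        simp [add_zsmul]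
        abel }
  have hφsurj : Function.Surjective φ := by
    rintro ⟨y, hy⟩
    rw [hS, AddSubgroup.mem_sup] at hy
    obtain ⟨u, hu, v, hv, huv⟩ := hy
    obtain ⟨c, hc⟩ := AddSubgroup.mem_zmultiples_iff.mp hv
    exact ⟨⟨⟨u, hu⟩, c⟩, by ext; simp [φ, hc, huv]⟩
  let ψ : B × ℤ →+ 𝕋 :=
    { toFun := fun p => f p.1 + p.2 • θ
      map_zero' := by simp
      map_add' := by
        rintro ⟨b, c⟩ ⟨b', c'⟩
        simp [add_zsmul]
        abel }
  have hconst : ∀ p q : B × ℤ, φ p = φ q → ψ p = ψ q := by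
    intro p q hpq
    have h0 : φ (p - q) = 0 := by rw [map_sub, hpq, sub_self]
    have h0' : ((p.1 - q.1 : B) : A) + (p.2 - q.2) • x = 0 := by
      have := congrArg (Subtype.val) h0
      simpa [φ] using this
    have hmemB : (p.2 - q.2) • x ∈ B := by
      have hx : (p.2 - q.2) • x = -((p.1 - q.1 : B) : A) := by
        rw [eq_neg_iff_add_eq_zero, add_comm]; exact h0'
      rw [hx]; exact neg_mem (p.1 - q.1).2
    have hsum : f (p.1 - q.1) + (p.2 - q.2) • θ = 0 := by
      rw [← hcomp _ hmemB, ← map_add]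
      convert map_zero f using 2
      ext
      simpa using h0'
    have hsub : ψ p - ψ q = 0 := by
      rw [← map_sub]
      show f (p - q).1 + (p - q).2 • θ = 0
      simpa using hsum
    exact sub_eq_zero.mp hsub
  let inv : S → B × ℤ := Function.surjInv hφsurj
  have hinv : ∀ y, φ (inv y) = y := Function.surjInv_eq hφsurj
  let f' : S →+ 𝕋 := AddMonoidHom.mk' (fun y => ψ (inv y)) (by
    intro y z
    have heq : φ (inv (y + z)) = φ (inv y + inv z) := by
      rw [map_add, hinv, hinv, hinv]
    show ψ (inv (y + z)) = ψ (inv y) + ψ (inv z)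
    rw [hconst _ _ heq, map_add])
  refine ⟨f', ?_, ?_⟩
  · intro y hy
    have : φ (inv ⟨y, AddSubgroup.mem_sup_left hy⟩) = φ (⟨⟨y, hy⟩, 0⟩ : B × ℤ) := by
      rw [hinv]; ext; simp [φ]
    show ψ _ = _
    rw [hconst _ _ this]
    simp [ψ]
  · have : φ (inv ⟨x, AddSubgroup.mem_sup_right (AddSubgroup.mem_zmultiples x)⟩)
        = φ ((0, 1) : B × ℤ) := by
      rw [hinv]; ext; simp [φ]
    show ψ _ = _
    rw [hconst _ _ this]
    simp [ψ]


lemma coe_zsmul (c : ℤ) (r : ℝ) : ((c • r : ℝ) : 𝕋) = c • (r : 𝕋) :=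
  map_zsmul (QuotientAddGroup.mk' (AddSubgroup.zmultiples (1:ℝ))) c r

lemma choose_theta (B : AddSubgroup A) (f : B →+ 𝕋) (x : A) (N D : ℕ)
    (hN : 0 < N) (hD : 0 < D) (hNB : (N : ℤ) • x ∈ B)
    (hdvd : ∀ c : ℤ, c • x ∈ B → (N : ℤ) ∣ c * D) :
    ∃ θ : 𝕋, (∀ c : ℤ, ∀ h : c • x ∈ B, f ⟨c • x, h⟩ = c • θ) ∧
      ‖θ‖ ≤ (D : ℝ) / (2 * N) := by
  classical
  set K : AddSubgroup ℤ := AddSubgroup.comap (zmultiplesHom A x) B with hK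
  obtain ⟨d, hd⟩ := Int.subgroup_cyclic K
  have hdK : ∀ c : ℤ, c • x ∈ B ↔ d ∣ c := by
    intro c
    have : c ∈ K ↔ c • x ∈ B := Iff.rfl
    rw [← this, hd, ← AddSubgroup.zmultiples_eq_closure, Int.mem_zmultiples_iff]
  have hdne : d ≠ 0 := by
    intro h0
    have : d ∣ (N : ℤ) := (hdK N).mp hNB
    rw [h0] at this
    have := zero_dvd_iff.mp this
    omega
  set dd := d.natAbs with hdddef
  have hddpos : 0 < dd := Int.natAbs_pos.mpr hdne
  have hddB : (dd : ℤ) • x ∈ B := (hdK dd).mpr (Int.dvd_natAbs.mpr dvd_rfl)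
  have hle : N ≤ dd * D := by
    have h1 : (N : ℤ) ∣ (dd : ℤ) * D := hdvd dd hddB
    have h2 : N ∣ dd * D := by exact_mod_cast h1
    exact Nat.le_of_dvd (Nat.mul_pos hddpos hD) h2
  set ζ := f ⟨(dd : ℤ) • x, hddB⟩ with hζ
  obtain ⟨w, hw⟩ : ∃ w : ℝ, (w : 𝕋) = ζ := by
    obtain ⟨w, hw⟩ := QuotientAddGroup.mk'_surjective (AddSubgroup.zmultiples (1:ℝ)) ζ
    exact ⟨w, hw⟩
  set z := w - round w with hzdef
  have hz : (z : 𝕋) = ζ := by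
    rw [← hw, hzdef, AddCircle.coe_sub]
    have : (((round w : ℤ) : ℝ) : 𝕋) = 0 := by
      rw [AddCircle.coe_eq_zero_iff]
      exact ⟨round w, by simp⟩
    rw [this, sub_zero]
  have hzabs : |z| ≤ 1 / 2 := abs_sub_round w
  refine ⟨((z / dd : ℝ) : 𝕋), ?_, ?_⟩
  · have hθd : (dd : ℤ) • ((z / dd : ℝ) : 𝕋) = ζ := by
      rw [← coe_zsmul, ← hz]
      congr 1
      have : (dd : ℝ) ≠ 0 := by positivity
      rw [zsmul_eq_mul]; push_cast
      field_simp
    intro c hc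
    obtain ⟨q, hq⟩ : (dd : ℤ) ∣ c := Int.natAbs_dvd.mpr ((hdK c).mp hc)
    have helt : (⟨c • x, hc⟩ : B) = q • (⟨(dd : ℤ) • x, hddB⟩ : B) := by
      ext
      push_cast [AddSubgroupClass.coe_zsmul]
      rw [hq, smul_smul, mul_comm]
    rw [helt, map_zsmul, ← hζ, ← hθd, smul_smul, hq, mul_comm]
  · have h1 : ‖((z / dd : ℝ) : 𝕋)‖ ≤ |z / dd| := by
      exact (QuotientAddGroup.norm_mk_le_norm (S := AddSubgroup.zmultiples (1:ℝ)) (m := z / dd)).trans_eq (Real.norm_eq_abs _)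
    refine h1.trans ?_
    rw [abs_div, abs_of_nonneg (by positivity : (0:ℝ) ≤ (dd:ℝ))]
    rw [div_le_div_iff₀ (by positivity) (by positivity)]
    have hN' : (N : ℝ) ≤ (dd : ℝ) * D := by exact_mod_cast hle
    nlinarith [hzabs, abs_nonneg z]


lemma sep (a : ℕ → A) (t : ℕ → ℕ) (ht : ∀ k, t k = addOrderOf (a k))
    (hfin : ∀ k, 0 < t k) (hdv : ∀ k, t k ∣ t (k + 1)) (g : A) (hg : g ≠ 0) :
    ∃ (χ : A →+ 𝕋) (m : ℕ), 0 < m ∧ χ g ≠ 0 ∧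
      ∀ k, ‖χ (a (k + 1))‖ ≤ ((t k : ℝ) * m) / (2 * t (k + 1)) := by
  classical
  set m : ℕ := max 1 (addOrderOf g) with hm
  have hmpos : 0 < m := lt_of_lt_of_le one_pos (le_max_left _ _)
  -- auxiliary sequences
  let x : ℕ → A := fun n => Nat.rec (motive := fun _ => A) g (fun k _ => a k) n
  have hx0 : x 0 = g := rfl
  have hxs : ∀ n, x (n + 1) = a n := fun n => rfl
  let BB : ℕ → AddSubgroup A :=
    fun n => Nat.rec (motive := fun _ => AddSubgroup A) ⊥ (fun k Bk => Bk ⊔ AddSubgroup.zmultiples (x k)) n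
  have hBB0 : BB 0 = ⊥ := rfl
  have hBBs : ∀ n, BB (n + 1) = BB n ⊔ AddSubgroup.zmultiples (x n) := fun n => rfl
  have hBBmono : Monotone BB := monotone_nat_of_le_succ (fun n => by
    rw [hBBs]; exact le_sup_left)
  have hxmem : ∀ n, x n ∈ BB (n + 1) := fun n => by
    rw [hBBs]; exact AddSubgroup.mem_sup_right (AddSubgroup.mem_zmultiples _)
  let sk : ℕ → ℕ := fun n => Nat.rec (motive := fun _ => ℕ) 1 (fun k _ => t k) n
  have hs0 : sk 0 = 1 := rfl
  have hss : ∀ n, sk (n + 1) = t n := fun n => rfl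
  have hspos : ∀ n, 0 < sk n := by
    intro n; cases n with
    | zero => exact one_pos
    | succ k => rw [hss]; exact hfin k
  have hsdvd : ∀ n, sk n ∣ t n := by
    intro n; cases n with
    | zero => exact one_dvd _
    | succ k => rw [hss]; exact hdv k
  have hta : ∀ n (c : ℤ), (t n : ℤ) ∣ c ↔ c • a n = 0 := by
    intro n c; rw [ht n]; exact addOrderOf_dvd_iff_zsmul_eq_zero
  have hta0 : ∀ n, (t n : ℤ) • a n = 0 := fun n => (hta n _).mp dvd_rfl
  -- killer lemma
  have kill : ∀ n, ∀ y ∈ BB (n + 1), (sk n : ℤ) • y ∈ AddSubgroup.zmultiples g := by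
    intro n
    induction n with
    | zero =>
      intro y hy
      rw [hBBs, hBB0, bot_sup_eq, hx0] at hy
      rw [hs0]
      simpa using hy
    | succ n ih =>
      intro y hy
      rw [hBBs (n + 1), AddSubgroup.mem_sup] at hy
      obtain ⟨u, hu, v, hv, huv⟩ := hy
      obtain ⟨c, hc⟩ := AddSubgroup.mem_zmultiples_iff.mp hv
      rw [hxs] at hc
      have hv0 : (t n : ℤ) • v = 0 := by
        rw [← hc, smul_comm, hta0, smul_zero]
      have hkill : (sk (n + 1) : ℤ) • y = (t n : ℤ) • u := by
        rw [hss, ← huv, smul_add, hv0, add_zero]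
      obtain ⟨q, hq⟩ := hsdvd n
      have hiu := ih u hu
      rw [hkill]
      have : (t n : ℤ) • u = (q : ℤ) • ((sk n : ℤ) • u) := by
        rw [smul_smul, ← Int.natCast_mul, mul_comm, ← hq]
      rw [this]
      exact zsmul_mem hiu _
  -- main divisibility
  have L2 : ∀ n (c : ℤ), c • a n ∈ BB (n + 1) → (t n : ℤ) ∣ c * ((sk n : ℤ) * m) := by
    intro n c hc
    obtain ⟨e, he⟩ := AddSubgroup.mem_zmultiples_iff.mp (kill n _ hc)
    rcases Nat.eq_zero_or_pos (addOrderOf g) with hr | hr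
    · have hm1 : m = 1 := by simp [hm, hr]
      have h1 : ((t n : ℤ) * e) • g = 0 := by
        rw [mul_smul, he, smul_comm ((t n : ℤ)) ((sk n : ℤ)), smul_comm ((t n : ℤ)) c, hta0,
          smul_zero, smul_zero]
      have he0 : e = 0 := by
        have h2 : (addOrderOf g : ℤ) ∣ (t n : ℤ) * e :=
          addOrderOf_dvd_iff_zsmul_eq_zero.mpr h1
        rw [hr] at h2
        have h3 := zero_dvd_iff.mp (by exact_mod_cast h2)
        have htn : (t n : ℤ) ≠ 0 := by
          have := (hfin n).ne'
          exact_mod_cast this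
        rcases mul_eq_zero.mp h3 with h | h
        · exact absurd h htn
        · exact h
      have h3 : ((sk n : ℤ) * c) • a n = 0 := by
        rw [mul_smul, ← he, he0, zero_smul]
      have h4 := (hta n _).mpr h3
      have : c * ((sk n : ℤ) * m) = ((sk n : ℤ) * c) * m := by ring
      rw [this]
      exact Dvd.dvd.mul_right h4 _
    · have hmg : (m : ℤ) • g = 0 := by
        have hmr : m = addOrderOf g := by rw [hm]; omega
        rw [hmr, natCast_zsmul]
        exact addOrderOf_nsmul_eq_zero g
      have h1 : ((m : ℤ) * ((sk n : ℤ) * c)) • a n = 0 := by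
        rw [mul_smul, mul_smul, ← he, smul_comm, hmg, smul_zero]
      have h2 := (hta n _).mpr h1
      have h3 : c * ((sk n : ℤ) * m) = (m : ℤ) * ((sk n : ℤ) * c) := by ring
      rw [h3]
      exact h2
  -- nonzero coe lemma
  have hcoe_ne : ∀ v : ℝ, 0 < v → v ≤ 1 / 2 → ((v : ℝ) : 𝕋) ≠ 0 := by
    intro v hv0 hv
    have h1 : ‖((v : ℝ) : 𝕋)‖ = |v| := by
      rw [AddCircle.norm_coe_eq_abs_iff _ (by norm_num : (1:ℝ) ≠ 0)]
      rw [abs_of_pos hv0]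
      simpa using hv
    intro h0
    rw [h0, norm_zero] at h1
    rw [abs_of_pos hv0] at h1
    linarith
  -- master extension step
  have master : ∀ n (f : ↥(BB n) →+ 𝕋), ∃ f' : ↥(BB (n + 1)) →+ 𝕋,
      (∀ y (hy : y ∈ BB n), f' ⟨y, hBBmono (Nat.le_succ n) hy⟩ = f ⟨y, hy⟩) ∧
      (n = 0 → f' ⟨x n, hxmem n⟩ ≠ 0) ∧
      (∀ k, n = k + 1 → ‖f' ⟨x n, hxmem n⟩‖ ≤ ((sk k : ℝ) * m) / (2 * t k)) := by
    intro n f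
    cases n with
    | zero =>
      have hθex : ∃ θ : 𝕋, θ ≠ 0 ∧ ∀ c : ℤ, ∀ hmem : c • g ∈ BB 0, f ⟨c • g, hmem⟩ = c • θ := by
        rcases Nat.eq_zero_or_pos (addOrderOf g) with hr | hr
        · refine ⟨((1 / 2 : ℝ) : 𝕋), hcoe_ne _ (by norm_num) (by norm_num), ?_⟩
          intro c hmem
          have h0 : c • g = 0 := AddSubgroup.mem_bot.mp (hBB0 ▸ hmem)
          have hc0 : c = 0 := by
            have h2 : (addOrderOf g : ℤ) ∣ c := addOrderOf_dvd_iff_zsmul_eq_zero.mpr h0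
            rw [hr] at h2
            exact_mod_cast zero_dvd_iff.mp (by exact_mod_cast h2)
          subst hc0
          have helt : (⟨(0 : ℤ) • g, hmem⟩ : ↥(BB 0)) = 0 := by ext; simp
          rw [helt, map_zero, zero_smul]
        · set r := addOrderOf g with hrdef
          have hr1 : r ≠ 1 := fun h1 => hg (AddMonoid.addOrderOf_eq_one_iff.mp h1)
          have hr2 : 2 ≤ r := by omega
          have hrpos : (0 : ℝ) < (r : ℝ) := by exact_mod_cast hr
          have h2r : (2 : ℝ) ≤ (r : ℝ) := by exact_mod_cast hr2
          refine ⟨(((r : ℝ)⁻¹ : ℝ) : 𝕋), hcoe_ne _ (by positivity) ?_, ?_⟩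
          · rw [inv_eq_one_div, div_le_div_iff₀ hrpos (by norm_num : (0:ℝ) < 2)]
            linarith
          · intro c hmem
            have h0 : c • g = 0 := AddSubgroup.mem_bot.mp (hBB0 ▸ hmem)
            obtain ⟨q, hq⟩ : (r : ℤ) ∣ c := addOrderOf_dvd_iff_zsmul_eq_zero.mpr h0
            have helt : (⟨c • g, hmem⟩ : ↥(BB 0)) = 0 := by ext; simpa using h0
            rw [helt, map_zero, hq, mul_comm, mul_smul]
            have hrθ : (r : ℤ) • (((r : ℝ)⁻¹ : ℝ) : 𝕋) = 0 := by
              rw [← coe_zsmul]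
              have hone : ((r : ℤ) • ((r : ℝ)⁻¹) : ℝ) = 1 := by
                rw [zsmul_eq_mul]; push_cast
                field_simp
              rw [hone]
              exact AddCircle.coe_period 1
            rw [hrθ, smul_zero]
      obtain ⟨θ, hθ0, hcomp⟩ := hθex
      obtain ⟨f', hf1, hf2⟩ := step (BB 0) f g θ hcomp
      refine ⟨f', fun y hy => hf1 y hy, fun _ => ?_, fun k hk => absurd hk (by omega)⟩
      intro hcon
      exact hθ0 (hf2.symm.trans hcon)
    | succ n =>
      have hNB : ((t n : ℕ) : ℤ) • a n ∈ BB (n + 1) := by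
        rw [hta0]
        exact zero_mem _
      have hdvd' : ∀ c : ℤ, c • a n ∈ BB (n + 1) → (t n : ℤ) ∣ c * ((sk n * m : ℕ) : ℤ) := by
        intro c hc
        have := L2 n c hc
        push_cast
        exact this
      obtain ⟨θ, hcomp, hbound⟩ := choose_theta (BB (n + 1)) f (a n) (t n) (sk n * m)
        (hfin n) (Nat.mul_pos (hspos n) hmpos) hNB hdvd'
      obtain ⟨f', hf1, hf2⟩ := step (BB (n + 1)) f (a n) θ hcomp
      refine ⟨f', fun y hy => hf1 y hy, fun h0 => absurd h0 (by omega), fun k hk => ?_⟩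
      have hnk : n = k := by omega
      subst hnk
      have hval : f' ⟨x (n + 1), hxmem (n + 1)⟩ = θ := hf2
      have hcast : ((sk n * m : ℕ) : ℝ) = (sk n : ℝ) * m := by push_cast; ring
      calc ‖f' ⟨x (n + 1), hxmem (n + 1)⟩‖ = ‖θ‖ := congrArg norm hval
        _ ≤ ((sk n : ℝ) * m) / (2 * t n) := by rw [← hcast]; exact hbound
  -- the chain of characters
  let FF : ∀ n, ↥(BB n) →+ 𝕋 :=
    fun n => Nat.rec (motive := fun k => ↥(BB k) →+ 𝕋) 0 (fun k fk => (master k fk).choose) n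
  have compat : ∀ n y (hy : y ∈ BB n),
      FF (n + 1) ⟨y, hBBmono (Nat.le_succ n) hy⟩ = FF n ⟨y, hy⟩ :=
    fun n => ((master n (FF n)).choose_spec).1
  have spec0 : FF 1 ⟨x 0, hxmem 0⟩ ≠ 0 := ((master 0 (FF 0)).choose_spec).2.1 rfl
  have specS : ∀ k, ‖FF (k + 2) ⟨x (k + 1), hxmem (k + 1)⟩‖ ≤ ((sk k : ℝ) * m) / (2 * t k) :=
    fun k => ((master (k + 1) (FF (k + 1))).choose_spec).2.2 k rfl
  have compat' : ∀ (n p : ℕ) (hnp : n ≤ p) y (hy : y ∈ BB n),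
      FF p ⟨y, hBBmono hnp hy⟩ = FF n ⟨y, hy⟩ := by
    intro n p hnp
    induction p, hnp using Nat.le_induction with
    | base => intro y hy; rfl
    | succ p hp ih =>
      intro y hy
      rw [← ih y hy]
      exact compat p y (hBBmono hp hy)
  set Bs : AddSubgroup A := ⨆ n, BB n with hBsdef
  have hmemiff : ∀ y : A, y ∈ Bs ↔ ∃ n, y ∈ BB n :=
    fun y => AddSubgroup.mem_iSup_of_directed (hBBmono.directed_le)
  have hGex : ∀ y : ↥Bs, ∃ n, (y : A) ∈ BB n := fun y => (hmemiff y).mp y.2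
  let Gf : ↥Bs → 𝕋 := fun y => FF (Nat.find (hGex y)) ⟨y, Nat.find_spec (hGex y)⟩
  have Geq : ∀ (y : A) (hyB : y ∈ Bs) (n : ℕ) (hy : y ∈ BB n), Gf ⟨y, hyB⟩ = FF n ⟨y, hy⟩ := by
    intro y hyB n hy
    have h1 := compat' _ (max (Nat.find (hGex ⟨y, hyB⟩)) n) (le_max_left _ _) y
      (Nat.find_spec (hGex ⟨y, hyB⟩))
    have h2 := compat' n (max (Nat.find (hGex ⟨y, hyB⟩)) n) (le_max_right _ _) y hy
    exact h1.symm.trans h2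
  let G : ↥Bs →+ 𝕋 := AddMonoidHom.mk' Gf (by
    intro y z
    obtain ⟨i, hi⟩ := hGex y
    obtain ⟨j, hj⟩ := hGex z
    have hyN : (y : A) ∈ BB (max i j) := hBBmono (le_max_left i j) hi
    have hzN : (z : A) ∈ BB (max i j) := hBBmono (le_max_right i j) hj
    have hyzN : ((y + z : ↥Bs) : A) ∈ BB (max i j) := add_mem hyN hzN
    rw [Geq _ (y + z).2 (max i j) hyzN, Geq _ y.2 (max i j) hyN, Geq _ z.2 (max i j) hzN,
      ← map_add]
    rfl)
  haveI : Module.Injective ℤ 𝕋 := Module.Baer.injective (Module.Baer.of_divisible _)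
  obtain ⟨hom, hhom⟩ := Module.Injective.extension_property (R := ℤ) (M := 𝕋) (P := ↥Bs)
    (P' := A) Bs.subtype.toIntLinearMap Subtype.val_injective G.toIntLinearMap
  have hχ : ∀ (y : A) (hy : y ∈ Bs), hom.toAddMonoidHom y = Gf ⟨y, hy⟩ := by
    intro y hy
    have := LinearMap.congr_fun hhom ⟨y, hy⟩
    simp at this; exact this
  refine ⟨hom.toAddMonoidHom, m, hmpos, ?_, ?_⟩
  · have hgB : g ∈ BB 1 := hxmem 0
    have hgBs : g ∈ Bs := (hmemiff g).mpr ⟨1, hgB⟩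
    rw [hχ g hgBs, Geq g hgBs 1 hgB]
    exact spec0
  · intro k
    have haB : a (k + 1) ∈ BB (k + 3) := hxmem (k + 2)
    have haBs : a (k + 1) ∈ Bs := (hmemiff _).mpr ⟨k + 3, haB⟩
    rw [hχ _ haBs, Geq _ haBs (k + 3) haB]
    exact specS (k + 1)

end TSeqAux

namespace TSeqAux
theorem main {A : Type*} [AddCommGroup A] (a : ℕ → A) (t : ℕ → ℕ)
    (ht : ∀ k, t k = addOrderOf (a k)) (hfin : ∀ k, 0 < t k)
    (hdvd : ∀ k, t k ∣ t (k + 1))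
    (h : Filter.Tendsto (fun k => t (k + 1) / t k) Filter.atTop Filter.atTop) :
    ∃ τ : TopologicalSpace A, @IsTopologicalAddGroup A τ _ ∧ @T2Space A τ ∧
      Filter.Tendsto a Filter.atTop (@nhds A τ 0) := by
  classical
  -- characters with small values along `a`, separating points
  have hsep : ∀ g : A, g ≠ 0 → ∃ χ : A →+ AddCircle (1 : ℝ),
      χ g ≠ 0 ∧ Filter.Tendsto (fun k => χ (a k)) Filter.atTop (nhds 0) := by
    intro g hg
    obtain ⟨χ, m, hm, hχg, hb⟩ := TSeqAux.sep a t ht hfin hdvd g hg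
    refine ⟨χ, hχg, ?_⟩
    rw [← tendsto_add_atTop_iff_nat 1]
    apply squeeze_zero_norm (fun k => hb k)
    -- the bound tends to zero
    have hq : ∀ k, ((t (k + 1) : ℝ)) = (t (k + 1) / t k : ℕ) * t k := by
      intro k
      rw [← Nat.cast_mul, Nat.div_mul_cancel (hdvd k)]
    have heq : ∀ k, ((t k : ℝ) * m) / (2 * t (k + 1)) = (m : ℝ) / (2 * (t (k + 1) / t k : ℕ)) := by
      intro k
      rw [hq k]
      have h1 : (t k : ℝ) ≠ 0 := by
        have := (hfin k).ne'
        positivity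
      have h2 : ((t (k + 1) / t k : ℕ) : ℝ) ≠ 0 := by
        have hpos : 0 < t (k + 1) / t k := Nat.div_pos (Nat.le_of_dvd (hfin (k+1)) (hdvd k)) (hfin k)
        have := hpos.ne'
        positivity
      field_simp
    have hlim : Filter.Tendsto (fun k => (m : ℝ) / (2 * (t (k + 1) / t k : ℕ)))
        Filter.atTop (nhds 0) := by
      apply Filter.Tendsto.div_atTop (tendsto_const_nhds)
      have h1 : Filter.Tendsto (fun k => ((t (k + 1) / t k : ℕ) : ℝ)) Filter.atTop Filter.atTop :=
        tendsto_natCast_atTop_atTop.comp h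
      exact h1.const_mul_atTop (by norm_num : (0:ℝ) < 2)
    simpa only [heq] using hlim
  -- the index type of separating characters
  let I := {χ : A →+ AddCircle (1 : ℝ) //
    Filter.Tendsto (fun k => χ (a k)) Filter.atTop (nhds 0)}
  let Φ : A →+ (I → AddCircle (1 : ℝ)) :=
    { toFun := fun y i => i.1 y
      map_zero' := by funext i; simp
      map_add' := by intro y z; funext i; simp }
  have hΦinj : Function.Injective Φ := by
    intro u v huv
    by_contra hne
    have hsub : u - v ≠ 0 := sub_ne_zero.mpr hne
    obtain ⟨χ, hχ, hχt⟩ := hsep _ hsub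
    have : Φ u ⟨χ, hχt⟩ = Φ v ⟨χ, hχt⟩ := by rw [huv]
    have h0 : χ (u - v) = 0 := by
      rw [map_sub, sub_eq_zero]
      exact this
    exact hχ h0
  refine ⟨TopologicalSpace.induced Φ inferInstance, topologicalAddGroup_induced Φ, ?_, ?_⟩
  · letI : TopologicalSpace A := TopologicalSpace.induced Φ inferInstance
    exact Topology.IsEmbedding.t2Space ⟨⟨rfl⟩, hΦinj⟩
  · letI : TopologicalSpace A := TopologicalSpace.induced Φ inferInstance
    rw [nhds_induced]
    rw [tendsto_comap_iff]
    have hΦ0 : Φ 0 = 0 := map_zero Φ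
    rw [hΦ0]
    rw [tendsto_pi_nhds]
    intro i
    have := i.2
    exact this
end TSeqAux

/-- If `t_k ∣ t_{k+1}` and `t_{k+1}/t_k → ∞`, then `{a_k}` is a T-sequence. -/
theorem stmt4 {A : Type*} [AddCommGroup A] (a : ℕ → A) (t : ℕ → ℕ)
    (ht : ∀ k, t k = addOrderOf (a k)) (hfin : ∀ k, 0 < t k)
    (hdvd : ∀ k, t k ∣ t (k + 1))
    (h : Filter.Tendsto (fun k => t (k + 1) / t k) Filter.atTop Filter.atTop) :
    IsTSeq a :=
  TSeqAux.main a t ht hfin hdvd h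
end
end

section
/- Let A be an almost torsion-free abelian group (i.e., A[n] = {a ∈ A : na = 0} is finite for every n). A sequence {a_k} in A of elements of finite order is a T-sequence if and only if for every l, n ∈ ℕ there exists m₀ such that A[n] ∩ A(l,m)_{a} = {0} for every m ≥ m₀. -/
open Filter Topology

noncomputable section

namespace ZP

open Filter Topology Pointwise

variable {A : Type*} [AddCommGroup A]

/-- single letters: `0` or `± a k` with `k ≥ m`. -/
def Astar (a : ℕ → A) (m : ℕ) : Set A :=
  {x | x = 0 ∨ ∃ k ≥ m, x = a k ∨ x = -a k}

lemma zero_mem_Astar (a : ℕ → A) (m : ℕ) : (0 : A) ∈ Astar a m := Or.inl rfl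

lemma Astar_anti (a : ℕ → A) {m m' : ℕ} (h : m ≤ m') : Astar a m' ⊆ Astar a m := by
  rintro x (rfl | ⟨k, hk, hx⟩)
  · exact Or.inl rfl
  · exact Or.inr ⟨k, le_trans h hk, hx⟩

lemma neg_mem_Astar {a : ℕ → A} {m : ℕ} {x : A} (hx : x ∈ Astar a m) : -x ∈ Astar a m := by
  rcases hx with rfl | ⟨k, hk, rfl | rfl⟩
  · exact Or.inl neg_zero
  · exact Or.inr ⟨k, hk, Or.inr rfl⟩
  · exact Or.inr ⟨k, hk, Or.inl (neg_neg _)⟩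

/-- words of length `n` with `i`-th letter in `Astar a (c i)`. -/
def S (a : ℕ → A) : ℕ → (ℕ → ℕ) → Set A
  | 0, _ => {0}
  | (n+1), c => {x | ∃ y ∈ Astar a (c 0), ∃ z ∈ S a n (fun i => c (i+1)), x = y + z}

def V (a : ℕ → A) (c : ℕ → ℕ) : Set A := ⋃ n, S a n c

lemma zero_mem_S (a : ℕ → A) : ∀ n c, (0 : A) ∈ S a n c
  | 0, _ => rfl
  | (n+1), c => ⟨0, zero_mem_Astar a _, 0, zero_mem_S a n _, (add_zero 0).symm⟩

lemma S_anti (a : ℕ → A) : ∀ (n : ℕ) {c c' : ℕ → ℕ}, (∀ i, c i ≤ c' i) →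
    S a n c' ⊆ S a n c
  | 0, _, _, _ => le_rfl
  | (n+1), c, c', h => by
    rintro x ⟨y, hy, z, hz, rfl⟩
    exact ⟨y, Astar_anti a (h 0) hy, z, S_anti a n (fun i => h (i+1)) hz, rfl⟩

lemma S_mono (a : ℕ → A) : ∀ (n : ℕ) (c : ℕ → ℕ), S a n c ⊆ S a (n+1) c
  | 0, c => by rintro x rfl; exact zero_mem_S a 1 c
  | (n+1), c => by
    rintro x ⟨y, hy, z, hz, rfl⟩
    exact ⟨y, hy, z, S_mono a n _ hz, rfl⟩

lemma S_le_mono (a : ℕ → A) (c : ℕ → ℕ) {n n' : ℕ} (h : n ≤ n') : S a n c ⊆ S a n' c := by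
  induction h with
  | refl => exact le_rfl
  | step _ ih => exact fun x hx => S_mono a _ _ (ih hx)

lemma neg_mem_S (a : ℕ → A) : ∀ (n : ℕ) (c : ℕ → ℕ) (x : A), x ∈ S a n c → -x ∈ S a n c
  | 0, c, x => by rintro rfl; simpa using zero_mem_S a 0 c
  | (n+1), c, x => by
    rintro ⟨y, hy, z, hz, rfl⟩
    exact ⟨-y, neg_mem_Astar hy, -z, neg_mem_S a n _ z hz, by abel⟩

lemma interleave (a : ℕ → A) : ∀ (n : ℕ) (c c₁ c₂ : ℕ → ℕ) (x y : A),
    x ∈ S a n c₁ → y ∈ S a n c₂ → (∀ i, c (2*i) ≤ c₁ i) → (∀ i, c (2*i+1) ≤ c₂ i) →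
    x + y ∈ S a (2*n) c
  | 0, c, _, _, x, y => by rintro rfl rfl _ _; simpa using zero_mem_S a 0 c
  | (n+1), c, c₁, c₂, _, _ => by
    rintro ⟨x₀, hx₀, x', hx', rfl⟩ ⟨y₀, hy₀, y', hy', rfl⟩ h1 h2
    have key : x' + y' ∈ S a (2*n) (fun i => c (i+2)) := by
      refine interleave a n _ _ _ x' y' hx' hy' (fun i => ?_) (fun i => ?_)
      · have := h1 (i+1); simpa [Nat.mul_add, Nat.mul_succ] using this
      · have := h2 (i+1)
        have e : 2*(i+1)+1 = (2*i+1)+2 := by ring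
        rw [e] at this; exact this
    have : x₀ + (y₀ + (x' + y')) ∈ S a (2*n+2) c := by
      refine ⟨x₀, Astar_anti a (by simpa using h1 0) hx₀, y₀ + (x' + y'), ?_, rfl⟩
      exact ⟨y₀, Astar_anti a (by simpa using h2 0) hy₀, x' + y', key, rfl⟩
    have e2 : 2*(n+1) = 2*n+2 := by ring
    rw [e2]
    convert this using 1
    abel

lemma zero_mem_V (a : ℕ → A) (c : ℕ → ℕ) : (0:A) ∈ V a c := Set.mem_iUnion.2 ⟨0, rfl⟩

lemma V_anti (a : ℕ → A) {c c' : ℕ → ℕ} (h : ∀ i, c i ≤ c' i) : V a c' ⊆ V a c := by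
  intro x hx
  rcases Set.mem_iUnion.1 hx with ⟨n, hn⟩
  exact Set.mem_iUnion.2 ⟨n, S_anti a n h hn⟩

lemma V_add_V (a : ℕ → A) (c : ℕ → ℕ) :
    V a (fun i => max (c (2*i)) (c (2*i+1))) + V a (fun i => max (c (2*i)) (c (2*i+1))) ⊆
      V a c := by
  rintro x ⟨u, hu, v, hv, rfl⟩
  rcases Set.mem_iUnion.1 hu with ⟨n, hn⟩
  rcases Set.mem_iUnion.1 hv with ⟨n', hn'⟩
  have hu' := S_le_mono a _ (le_max_left n n') hn
  have hv' := S_le_mono a _ (le_max_right n n') hn'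
  exact Set.mem_iUnion.2 ⟨2 * max n n',
    interleave a _ c _ _ u v hu' hv' (fun i => le_max_left _ _) (fun i => le_max_right _ _)⟩

lemma neg_mem_V (a : ℕ → A) (c : ℕ → ℕ) {x : A} (hx : x ∈ V a c) : -x ∈ V a c := by
  rcases Set.mem_iUnion.1 hx with ⟨n, hn⟩
  exact Set.mem_iUnion.2 ⟨n, neg_mem_S a n c x hn⟩

lemma a_mem_V (a : ℕ → A) (c : ℕ → ℕ) {k : ℕ} (hk : c 0 ≤ k) : a k ∈ V a c :=
  Set.mem_iUnion.2 ⟨1, ⟨a k, Or.inr ⟨k, hk, Or.inl rfl⟩, 0, rfl, (add_zero _).symm⟩⟩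


lemma peel {a : ℕ → A} {s : Finset ℕ} {co : ℕ → ℤ} (hne : s.Nonempty)
    (hnz : ∀ k ∈ s, co k ≠ 0) :
    ∃ (k₀ : ℕ) (e : ℤ) (s' : Finset ℕ) (co' : ℕ → ℤ), k₀ ∈ s ∧ (e = 1 ∨ e = -1) ∧ s' ⊆ s ∧
      (∀ k ∈ s', co' k ≠ 0) ∧
      (∑ k ∈ s', (co' k).natAbs) + 1 = ∑ k ∈ s, (co k).natAbs ∧
      ∑ k ∈ s, co k • a k = e • a k₀ + ∑ k ∈ s', co' k • a k := by
  obtain ⟨k₀, hk₀⟩ := hne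
  have hco : co k₀ ≠ 0 := hnz k₀ hk₀
  set e : ℤ := if 0 < co k₀ then 1 else -1 with he
  have hee : e = 1 ∨ e = -1 := by unfold e; split <;> simp
  have habs : (co k₀ - e).natAbs + 1 = (co k₀).natAbs := by
    unfold e; split <;> omega
  set co' : ℕ → ℤ := Function.update co k₀ (co k₀ - e) with hco'
  have hco'k : ∀ k ≠ k₀, co' k = co k := fun k hk => Function.update_of_ne hk _ _
  have hco'k₀ : co' k₀ = co k₀ - e := Function.update_self _ _ _
  -- sum splits
  have hsum : ∑ k ∈ s, co k • a k = co k₀ • a k₀ + ∑ k ∈ s.erase k₀, co k • a k :=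
    (Finset.add_sum_erase s (fun k => co k • a k) hk₀).symm
  have hsum' : ∑ k ∈ s, co' k • a k = co' k₀ • a k₀ + ∑ k ∈ s.erase k₀, co k • a k := by
    rw [← Finset.add_sum_erase s (fun k => co' k • a k) hk₀]
    congr 1
    exact Finset.sum_congr rfl fun k hk => by rw [hco'k k (Finset.ne_of_mem_erase hk)]
  have habs_sum : (∑ k ∈ s, (co' k).natAbs) + 1 = ∑ k ∈ s, (co k).natAbs := by
    rw [← Finset.add_sum_erase s (fun k => (co' k).natAbs) hk₀,
        ← Finset.add_sum_erase s (fun k => (co k).natAbs) hk₀]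
    have : ∑ k ∈ s.erase k₀, (co' k).natAbs = ∑ k ∈ s.erase k₀, (co k).natAbs :=
      Finset.sum_congr rfl fun k hk => by rw [hco'k k (Finset.ne_of_mem_erase hk)]
    rw [this, hco'k₀]
    omega
  by_cases hc : co k₀ = e
  · refine ⟨k₀, e, s.erase k₀, co', hk₀, hee, Finset.erase_subset _ _, ?_, ?_, ?_⟩
    · exact fun k hk => by
        rw [hco'k k (Finset.ne_of_mem_erase hk)]; exact hnz k (Finset.mem_of_mem_erase hk)
    · have : ∑ k ∈ s.erase k₀, (co' k).natAbs = (∑ k ∈ s, (co' k).natAbs) := by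
        rw [← Finset.add_sum_erase s (fun k => (co' k).natAbs) hk₀, hco'k₀, hc]
        simp
      rw [this, habs_sum]
    · rw [hsum, hc]
      congr 1
      exact Finset.sum_congr rfl fun k hk => by rw [hco'k k (Finset.ne_of_mem_erase hk)]
  · refine ⟨k₀, e, s, co', hk₀, hee, le_rfl, ?_, habs_sum, ?_⟩
    · intro k hk
      by_cases hkk : k = k₀
      · rw [hkk, hco'k₀]; intro h; apply hc; omega
      · rw [hco'k k hkk]; exact hnz k hk
    · rw [hsum, hsum', hco'k₀, sub_smul]
      rcases hee with h | h <;> rw [h] <;> abel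


lemma S_rep (a : ℕ → A) : ∀ (n : ℕ) (c : ℕ → ℕ), Monotone c → ∀ x ∈ S a n c,
    ∃ (s : Finset ℕ) (co : ℕ → ℤ), (∀ k, k ∉ s → co k = 0) ∧
      x = ∑ k ∈ s, co k • a k ∧
      ∀ r, (∑ k ∈ s.filter (· < c r), (co k).natAbs) ≤ r
  | 0, c, _, x => by
    rintro rfl
    exact ⟨∅, 0, by simp, by simp, by simp⟩
  | (n+1), c, hc, x => by
    rintro ⟨x₀, hx₀, z, hz, rfl⟩
    obtain ⟨s, co, hout, hzsum, hpat⟩ :=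
      S_rep a n (fun i => c (i+1)) (fun i j hij => hc (Nat.succ_le_succ hij)) z hz
    have hsub01 : s.filter (· < c 0) ⊆ s.filter (· < c 1) :=
      Finset.monotone_filter_right s (fun k _ hk => lt_of_lt_of_le hk (hc (by norm_num)))
    have claim0 : ∀ T ⊆ s.filter (· < c 1), (∑ k ∈ T, (co k).natAbs) ≤ 0 :=
      fun T hT => le_trans (Finset.sum_le_sum_of_subset hT) (hpat 0)
    rcases hx₀ with rfl | ⟨k₀, hk₀, hx₀⟩
    · refine ⟨s, co, hout, by rw [zero_add, hzsum], fun r => ?_⟩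
      match r with
      | 0 => exact le_trans (claim0 _ hsub01) (by norm_num)
      | (r+1) => exact le_trans (hpat r) (by omega)
    · obtain ⟨e, hee, rfl⟩ : ∃ e : ℤ, (e = 1 ∨ e = -1) ∧ x₀ = e • a k₀ := by
        rcases hx₀ with rfl | rfl
        · exact ⟨1, Or.inl rfl, by simp⟩
        · exact ⟨-1, Or.inr rfl, by simp⟩
      clear hx₀
      set s' : Finset ℕ := insert k₀ s with hs'
      set co' : ℕ → ℤ := Function.update co k₀ (co k₀ + e) with hco'def
      have hco'k : ∀ k ≠ k₀, co' k = co k := fun k hk => Function.update_of_ne hk _ _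
      have hco'k₀ : co' k₀ = co k₀ + e := Function.update_self _ _ _
      have hout' : ∀ k, k ∉ s' → co' k = 0 := by
        intro k hk
        have h1 : k ≠ k₀ := fun h => hk (h ▸ Finset.mem_insert_self k₀ s)
        rw [hco'k k h1]; exact hout k (fun h => hk (Finset.mem_insert_of_mem h))
      have hsplit : ∑ k ∈ s, co k • a k = co k₀ • a k₀ + ∑ k ∈ s.erase k₀, co k • a k := by
        by_cases hk : k₀ ∈ s
        · exact (Finset.add_sum_erase s (fun k => co k • a k) hk).symm
        · rw [hout k₀ hk, Finset.erase_eq_of_notMem hk, zero_smul, zero_add]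
      have hsum' : ∑ k ∈ s', co' k • a k = (co k₀ + e) • a k₀ + ∑ k ∈ s.erase k₀, co k • a k := by
        rw [← Finset.add_sum_erase s' (fun k => co' k • a k) (Finset.mem_insert_self k₀ s),
            hco'k₀, Finset.erase_insert_eq_erase]
        congr 1
        exact Finset.sum_congr rfl fun k hk => by rw [hco'k k (Finset.ne_of_mem_erase hk)]
      refine ⟨s', co', hout', ?_, ?_⟩
      · rw [hzsum, hsum', hsplit, add_smul]; abel
      · intro r
        match r with
        | 0 =>
          have hT : s'.filter (· < c 0) ⊆ s.filter (· < c 1) := by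
            intro k hk
            rw [Finset.mem_filter] at hk ⊢
            rcases Finset.mem_insert.1 hk.1 with rfl | hks
            · exact absurd hk.2 (not_lt.2 hk₀)
            · exact ⟨hks, lt_of_lt_of_le hk.2 (hc (by norm_num))⟩
          have heq : ∑ k ∈ s'.filter (· < c 0), (co' k).natAbs
              = ∑ k ∈ s'.filter (· < c 0), (co k).natAbs := by
            refine Finset.sum_congr rfl fun k hk => ?_
            have : k ≠ k₀ := by
              rintro rfl
              exact absurd (Finset.mem_filter.1 hk).2 (not_lt.2 hk₀)
            rw [hco'k k this]
          rw [heq]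
          exact le_trans (le_trans (Finset.sum_le_sum_of_subset
            (fun k hk => hT hk)) (hpat 0)) (by norm_num)
        | (r+1) =>
          set T := s'.filter (· < c (r+1)) with hTdef
          have step1 : ∑ k ∈ T, (co' k).natAbs ≤ (∑ k ∈ T, (co k).natAbs) + 1 := by
            by_cases hkT : k₀ ∈ T
            · rw [← Finset.add_sum_erase T (fun k => (co' k).natAbs) hkT,
                  ← Finset.add_sum_erase T (fun k => (co k).natAbs) hkT]
              have heq : ∑ k ∈ T.erase k₀, (co' k).natAbs
                  = ∑ k ∈ T.erase k₀, (co k).natAbs :=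
                Finset.sum_congr rfl fun k hk => by rw [hco'k k (Finset.ne_of_mem_erase hk)]
              rw [heq, hco'k₀]
              have : (co k₀ + e).natAbs ≤ (co k₀).natAbs + 1 := by
                rcases hee with rfl | rfl <;> omega
              omega
            · have heq : ∑ k ∈ T, (co' k).natAbs = ∑ k ∈ T, (co k).natAbs :=
                Finset.sum_congr rfl fun k hk => by
                  rw [hco'k k]; rintro rfl; exact hkT hk
              omega
          have step2 : ∑ k ∈ T, (co k).natAbs ≤ ∑ k ∈ s.filter (· < c (r+1)), (co k).natAbs := by
            have hzero : ∑ k ∈ T, (co k).natAbs = ∑ k ∈ T.filter (· ∈ s), (co k).natAbs := by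
              refine (Finset.sum_subset (Finset.filter_subset _ _) ?_).symm
              intro k hk hks
              have : k ∉ s := fun h => hks (Finset.mem_filter.2 ⟨hk, h⟩)
              rw [hout k this]; rfl
            rw [hzero]
            refine Finset.sum_le_sum_of_subset ?_
            intro k hk
            rw [Finset.mem_filter] at hk ⊢
            exact ⟨hk.2, (Finset.mem_filter.1 hk.1).2⟩
          have := hpat r
          omega


/-- values of sums supported below `M` with weight at most `j`. -/
def YSet (a : ℕ → A) (M j : ℕ) : Set A :=
  {x | ∃ (s : Finset ℕ) (c : ℕ → ℤ), (∀ k ∈ s, k < M) ∧ (∀ k ∈ s, c k ≠ 0) ∧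
    (∑ k ∈ s, (c k).natAbs) ≤ j ∧ x = ∑ k ∈ s, c k • a k}

lemma zero_mem_YSet (a : ℕ → A) (M j : ℕ) : (0:A) ∈ YSet a M j :=
  ⟨∅, 0, by simp, by simp, by simp, by simp⟩

lemma YSet_finite (a : ℕ → A) (M : ℕ) : ∀ j, (YSet a M j).Finite
  | 0 => by
    refine Set.Finite.subset (Set.finite_singleton 0) ?_
    rintro x ⟨s, c, _, hnz, hwt, rfl⟩
    have : s = ∅ := by
      by_contra hne
      obtain ⟨k, hk⟩ := Finset.nonempty_iff_ne_empty.2 hne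
      have h1 : 1 ≤ (c k).natAbs := by
        have := hnz k hk; omega
      have h2 : (c k).natAbs ≤ ∑ i ∈ s, (c i).natAbs :=
        Finset.single_le_sum (f := fun i => (c i).natAbs) (fun i _ => Nat.zero_le _) hk
      omega
    simp [this]
  | (j+1) => by
    have hsub : YSet a M (j+1) ⊆ YSet a M j ∪
        ⋃ k ∈ Finset.range M, ((a k + ·) '' YSet a M j ∪ ((-a k) + ·) '' YSet a M j) := by
      rintro x ⟨s, c, hlt, hnz, hwt, rfl⟩
      rcases Finset.eq_empty_or_nonempty s with rfl | hne
      · exact Or.inl (by simpa using zero_mem_YSet a M j)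
      · obtain ⟨k₀, e, s', co', hk₀, hee, hsub, hnz', hwt', hsum⟩ := peel (a := a) hne hnz
        have hx' : (∑ k ∈ s', co' k • a k) ∈ YSet a M j :=
          ⟨s', co', fun k hk => hlt k (hsub hk), hnz', by omega, rfl⟩
        have hk₀M : k₀ ∈ Finset.range M := Finset.mem_range.2 (hlt k₀ hk₀)
        refine Or.inr (Set.mem_biUnion hk₀M ?_)
        rcases hee with rfl | rfl
        · exact Or.inl ⟨_, hx', by rw [hsum, one_smul]⟩
        · exact Or.inr ⟨_, hx', by rw [hsum, neg_smul, one_smul]⟩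
    refine Set.Finite.subset ?_ hsub
    refine (YSet_finite a M j).union ?_
    refine Set.Finite.biUnion (Finset.range M).finite_toSet (fun k _ => ?_)
    exact ((YSet_finite a M j).image _).union ((YSet_finite a M j).image _)

lemma TSet_torsion {a : ℕ → A} (hfin : ∀ k, 0 < addOrderOf (a k)) {l m : ℕ} {x : A}
    (hx : x ∈ TSet a l m) : ∃ N : ℕ, 0 < N ∧ N • x = 0 := by
  obtain ⟨s, c, _, _, _, rfl⟩ := hx
  refine ⟨∏ k ∈ s, addOrderOf (a k), Finset.prod_pos (fun k _ => hfin k), ?_⟩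
  rw [Finset.smul_sum]
  refine Finset.sum_eq_zero (fun k hk => ?_)
  have hdvd : addOrderOf (a k) ∣ ∏ k ∈ s, addOrderOf (a k) := Finset.dvd_prod_of_mem _ hk
  have h0 : (∏ k ∈ s, addOrderOf (a k)) • a k = 0 := addOrderOf_dvd_iff_nsmul_eq_zero.1 hdvd
  rw [smul_comm, h0, smul_zero]

lemma zero_mem_TSet (a : ℕ → A) (l m : ℕ) : (0:A) ∈ TSet a l m :=
  ⟨∅, 0, by simp, by simp, by simp, by simp⟩


/-- One step of the Zelenyuk–Protasov recursion. -/
lemma step {a : ℕ → A} {g : A}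
    (hμ : ∀ h : A, h ≠ 0 → ∀ l : ℕ, ∃ m₀ : ℕ, ∀ m ≥ m₀, h ∉ TSet a l m)
    (j M : ℕ) : ∃ m, M < m ∧ ∀ (sy : Finset ℕ) (cy : ℕ → ℤ) (z : A),
      (∀ k ∈ sy, k < m) → (∀ k ∈ sy, cy k ≠ 0) → (∑ k ∈ sy, (cy k).natAbs) ≤ j →
      z ∈ TSet a (j+1) m → z ≠ 0 → g = (∑ k ∈ sy, cy k • a k) + z →
      ∃ s' ⊆ sy, g = ∑ k ∈ s', cy k • a k := by
  -- the auxiliary "next stage" construction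
  have next : ∀ M' : ℕ, ∃ M'' : ℕ, M' < M'' ∧
      ∀ u ∈ YSet a M' j, g - u ≠ 0 → ∀ m' ≥ M'', g - u ∉ TSet a (2*j+1) m' := by
    intro M'
    classical
    set f : A → ℕ := fun u => if h : g - u = 0 then 0 else (hμ (g - u) h (2*j+1)).choose
      with hf
    obtain ⟨b, hb⟩ := ((YSet_finite a M' j).image f).bddAbove
    refine ⟨max (M' + 1) b + 1, by omega, ?_⟩
    intro u hu hgu m' hm'
    have hfu : f u ≤ b := hb (Set.mem_image_of_mem f hu)
    have : f u = (hμ (g - u) hgu (2*j+1)).choose := by rw [hf]; simp [hgu]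
    exact (hμ (g - u) hgu (2*j+1)).choose_spec m' (by omega)
  set Mseq : ℕ → ℕ := fun i => Nat.rec (M + 1) (fun _ prev => (next prev).choose) i with hMseq
  have hM0 : Mseq 0 = M + 1 := rfl
  have hsucc : ∀ i, Mseq (i+1) = (next (Mseq i)).choose := fun i => rfl
  have hlt : ∀ i, Mseq i < Mseq (i+1) := fun i => by
    rw [hsucc]; exact (next (Mseq i)).choose_spec.1
  have hspec : ∀ i, ∀ u ∈ YSet a (Mseq i) j, g - u ≠ 0 →
      ∀ m' ≥ Mseq (i+1), g - u ∉ TSet a (2*j+1) m' := fun i => by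
    rw [hsucc]; exact (next (Mseq i)).choose_spec.2
  have hmono : StrictMono Mseq := strictMono_nat_of_lt_succ hlt
  have hM : M < Mseq (j+2) := by
    have h02 : Mseq 0 ≤ Mseq (j+2) := hmono.monotone (a := 0) (b := j+2) (Nat.zero_le _)
    omega
  refine ⟨Mseq (j+2), hM, ?_⟩
  intro sy cy z hsy hnz hwt hz hz0 hrep
  classical
  -- find an empty window
  have hwin : ∃ i, i < j + 2 ∧ ∀ k ∈ sy, ¬(Mseq i ≤ k ∧ k < Mseq (i+1)) := by
    by_contra hcon
    push_neg at hcon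
    choose w hw1 hw2 hw3 using hcon
    set F : Fin (j+2) → ℕ := fun i => w i.1 i.2 with hF
    have hinj : Function.Injective F := by
      intro i i' hii
      by_contra hne
      rcases Ne.lt_or_gt (fun h : i = i' => hne h) with h | h
      · have h1 : F i < Mseq (i.1 + 1) := hw3 i.1 i.2
        have h2 : Mseq (i.1+1) ≤ Mseq i'.1 := hmono.monotone h
        have h3 : Mseq i'.1 ≤ F i' := hw2 i'.1 i'.2
        omega
      · have h1 : F i' < Mseq (i'.1 + 1) := hw3 i'.1 i'.2
        have h2 : Mseq (i'.1+1) ≤ Mseq i.1 := hmono.monotone h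
        have h3 : Mseq i.1 ≤ F i := hw2 i.1 i.2
        omega
    have hmaps : ∀ i : Fin (j+2), F i ∈ sy := fun i => hw1 i.1 i.2
    have hcard : j + 2 ≤ sy.card := by
      have := Finset.card_le_card_of_injOn (s := (Finset.univ : Finset (Fin (j+2)))) F
        (fun i _ => hmaps i) (fun i _ i' _ h => hinj h)
      simpa using this
    have hcard2 : sy.card ≤ ∑ k ∈ sy, (cy k).natAbs := by
      rw [Finset.card_eq_sum_ones]
      refine Finset.sum_le_sum (fun k hk => ?_)
      have := hnz k hk; omega
    omega
  obtain ⟨i, hij, hwini⟩ := hwin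
  set su : Finset ℕ := sy.filter (· < Mseq i) with hsu
  set sv : Finset ℕ := sy.filter (fun k => ¬ k < Mseq i) with hsv
  have hsv_ge : ∀ k ∈ sv, Mseq (i+1) ≤ k := by
    intro k hk
    rw [hsv, Finset.mem_filter] at hk
    have := hwini k hk.1
    omega
  set u : A := ∑ k ∈ su, cy k • a k with hu
  by_cases hgu : g - u = 0
  · exact ⟨su, Finset.filter_subset _ _, by rw [← hu]; rwa [sub_eq_zero] at hgu⟩
  · -- combine v and z into a tail representation of g - u
    obtain ⟨sz, cz, hsz_ge, hsz_nz, hsz_wt, hzrep⟩ := hz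
    set sh : Finset ℕ := sv ∪ sz with hsh
    set ch : ℕ → ℤ := fun k => if k < Mseq (j+2) then cy k else cz k with hch
    have hdisj : Disjoint sv sz := by
      refine Finset.disjoint_left.2 (fun k hk hk' => ?_)
      have h1 : k < Mseq (j+2) := hsy k (Finset.mem_filter.1 hk).1
      have h2 : Mseq (j+2) ≤ k := hsz_ge k hk'
      omega
    have hch_v : ∀ k ∈ sv, ch k = cy k := fun k hk => by
      rw [hch]; simp [hsy k (Finset.mem_filter.1 hk).1]
    have hch_z : ∀ k ∈ sz, ch k = cz k := fun k hk => by
      rw [hch]; simp [not_lt.2 (hsz_ge k hk)]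
    have hmem : g - u ∈ TSet a (2*j+1) (Mseq (i+1)) := by
      refine ⟨sh, ch, ?_, ?_, ?_, ?_⟩
      · intro k hk
        rcases Finset.mem_union.1 hk with hk | hk
        · exact hsv_ge k hk
        · exact le_trans (hmono.monotone (a := i+1) (b := j+2) (Nat.succ_le_of_lt hij)) (hsz_ge k hk)
      · intro k hk
        rcases Finset.mem_union.1 hk with hk | hk
        · rw [hch_v k hk]; exact hnz k (Finset.mem_filter.1 hk).1
        · rw [hch_z k hk]; exact hsz_nz k hk
      · rw [Finset.sum_union hdisj]
        have e1 : ∑ k ∈ sv, (ch k).natAbs = ∑ k ∈ sv, (cy k).natAbs :=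
          Finset.sum_congr rfl (fun k hk => by rw [hch_v k hk])
        have e2 : ∑ k ∈ sz, (ch k).natAbs = ∑ k ∈ sz, (cz k).natAbs :=
          Finset.sum_congr rfl (fun k hk => by rw [hch_z k hk])
        have e3 : ∑ k ∈ sv, (cy k).natAbs ≤ ∑ k ∈ sy, (cy k).natAbs :=
          Finset.sum_le_sum_of_subset (Finset.filter_subset _ _)
        rw [e1, e2]
        omega
      · rw [Finset.sum_union hdisj]
        have e1 : ∑ k ∈ sv, ch k • a k = ∑ k ∈ sv, cy k • a k :=
          Finset.sum_congr rfl (fun k hk => by rw [hch_v k hk])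
        have e2 : ∑ k ∈ sz, ch k • a k = ∑ k ∈ sz, cz k • a k :=
          Finset.sum_congr rfl (fun k hk => by rw [hch_z k hk])
        have e4 : ∑ k ∈ su, cy k • a k + ∑ k ∈ sv, cy k • a k = ∑ k ∈ sy, cy k • a k :=
          Finset.sum_filter_add_sum_filter_not sy _ _
        rw [e1, e2, ← hzrep]
        rw [hrep, hu]
        rw [← e4]
        abel
    have huY : u ∈ YSet a (Mseq i) j := by
      refine ⟨su, cy, fun k hk => (Finset.mem_filter.1 hk).2, 
        fun k hk => hnz k (Finset.mem_filter.1 hk).1, ?_, rfl⟩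
      exact le_trans (Finset.sum_le_sum_of_subset (Finset.filter_subset _ _)) hwt
    exact absurd hmem (hspec i u huY hgu (Mseq (i+1)) le_rfl)


lemma main_avoid {a : ℕ → A} {g : A}
    (hμ : ∀ h : A, h ≠ 0 → ∀ l : ℕ, ∃ m₀ : ℕ, ∀ m ≥ m₀, h ∉ TSet a l m)
    (hg : g ≠ 0) : ∃ c : ℕ → ℕ, StrictMono c ∧ ∀ n, g ∉ S a n c := by
  classical
  set c : ℕ → ℕ := fun i => Nat.rec (motive := fun _ => ℕ) (step (g := g) hμ 0 0).choose
    (fun j prev => (step (g := g) hμ (j+1) prev).choose) i with hcdef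
  have hsucc : ∀ j, c (j+1) = (step (g := g) hμ (j+1) (c j)).choose := fun j => by rw [hcdef]
  have hlt : ∀ j, c j < c (j+1) := fun j => by
    rw [hsucc]; exact (step (g := g) hμ (j+1) (c j)).choose_spec.1
  have hmono : StrictMono c := strictMono_nat_of_lt_succ hlt
  have hgood : ∀ j, ∀ (sy : Finset ℕ) (cy : ℕ → ℤ) (z : A),
      (∀ k ∈ sy, k < c j) → (∀ k ∈ sy, cy k ≠ 0) → (∑ k ∈ sy, (cy k).natAbs) ≤ j →
      z ∈ TSet a (j+1) (c j) → z ≠ 0 → g = (∑ k ∈ sy, cy k • a k) + z →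
      ∃ s' ⊆ sy, g = ∑ k ∈ s', cy k • a k := by
    intro j
    match j with
    | 0 => exact (step (g := g) hμ 0 0).choose_spec.2
    | (j+1) => rw [hsucc]; exact (step (g := g) hμ (j+1) (c j)).choose_spec.2
  refine ⟨c, hmono, ?_⟩
  -- key claim: no "admissible" representation of g exists
  have claim : ∀ W (s : Finset ℕ) (co : ℕ → ℤ), (∀ k ∈ s, co k ≠ 0) →
      g = ∑ k ∈ s, co k • a k →
      (∀ r, (∑ k ∈ s.filter (· < c r), (co k).natAbs) ≤ r) →
      (∑ k ∈ s, (co k).natAbs) ≤ W → False := by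
    intro W
    induction W with
    | zero =>
      intro s co hnz hrep _ hwt
      rcases Finset.eq_empty_or_nonempty s with rfl | ⟨k, hk⟩
      · rw [Finset.sum_empty] at hrep; exact hg hrep
      · have h1 : 1 ≤ (co k).natAbs := by have := hnz k hk; omega
        have h2 : (co k).natAbs ≤ ∑ i ∈ s, (co i).natAbs :=
          Finset.single_le_sum (f := fun i => (co i).natAbs) (fun i _ => Nat.zero_le _) hk
        omega
    | succ W ih =>
      intro s co hnz hrep hpat hwt
      rcases Finset.eq_empty_or_nonempty s with rfl | hne
      · rw [Finset.sum_empty] at hrep; exact hg hrep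
      set mx := s.max' hne with hmx
      have hmxs : mx ∈ s := s.max'_mem hne
      have hge0 : ∀ k ∈ s, c 0 ≤ k := by
        intro k hk
        by_contra hlt0
        have hkf : k ∈ s.filter (· < c 0) := Finset.mem_filter.2 ⟨hk, by omega⟩
        have h1 : 1 ≤ (co k).natAbs := by have := hnz k hk; omega
        have h2 : (co k).natAbs ≤ ∑ i ∈ s.filter (· < c 0), (co i).natAbs :=
          Finset.single_le_sum (f := fun i => (co i).natAbs) (fun i _ => Nat.zero_le _) hkf
        have := hpat 0
        omega
      -- the top block r*
      set j := Nat.findGreatest (fun r => c r ≤ mx) mx with hjdef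
      have hP0 : c 0 ≤ mx := hge0 mx hmxs
      have hPj : c j ≤ mx := Nat.findGreatest_spec (P := fun r => c r ≤ mx) (Nat.zero_le mx) hP0
      have hmxlt : mx < c (j+1) := by
        rcases le_or_gt (j+1) mx with hjm | hjm
        · have hng : ¬ (c (j+1) ≤ mx) :=
            Nat.findGreatest_is_greatest (P := fun r => c r ≤ mx) (n := mx) (by omega) hjm
          omega
        · have h1 : j + 1 ≤ c (j+1) := hmono.le_apply
          omega
      have hslt : ∀ k ∈ s, k < c (j+1) := fun k hk =>
        lt_of_le_of_lt (Finset.le_max' s k hk) hmxlt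
      -- total weight bound
      have hwt_tot : (∑ k ∈ s, (co k).natAbs) ≤ j + 1 := by
        have : s.filter (· < c (j+1)) = s := Finset.filter_true_of_mem hslt
        have := hpat (j+1)
        rw [Finset.filter_true_of_mem hslt] at this
        exact this
      set sy := s.filter (· < c j) with hsydef
      set sz := s.filter (fun k => ¬ k < c j) with hszdef
      have hsplit : (∑ k ∈ sy, co k • a k) + ∑ k ∈ sz, co k • a k = ∑ k ∈ s, co k • a k :=
        Finset.sum_filter_add_sum_filter_not s _ _
      have hwtsplit : (∑ k ∈ sy, (co k).natAbs) + ∑ k ∈ sz, (co k).natAbs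
          = ∑ k ∈ s, (co k).natAbs :=
        Finset.sum_filter_add_sum_filter_not s _ _
      have hmxz : mx ∈ sz := Finset.mem_filter.2 ⟨hmxs, by omega⟩
      have hwtz1 : 1 ≤ ∑ k ∈ sz, (co k).natAbs := by
        have h1 : 1 ≤ (co mx).natAbs := by have := hnz mx hmxs; omega
        have h2 : (co mx).natAbs ≤ ∑ i ∈ sz, (co i).natAbs :=
          Finset.single_le_sum (f := fun i => (co i).natAbs) (fun i _ => Nat.zero_le _) hmxz
        omega
      have hwty : (∑ k ∈ sy, (co k).natAbs) ≤ W := by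
        omega
      set z : A := ∑ k ∈ sz, co k • a k with hzdef
      by_cases hz0 : z = 0
      · -- recurse on the smaller representation sy
        refine ih sy co (fun k hk => hnz k (Finset.mem_filter.1 hk).1) ?_ ?_ hwty
        · rw [hrep, ← hsplit, hz0, add_zero]
        · intro r
          refine le_trans (Finset.sum_le_sum_of_subset ?_) (hpat r)
          intro k hk
          rw [Finset.mem_filter] at hk ⊢
          exact ⟨(Finset.mem_filter.1 hk.1).1, hk.2⟩
      · -- apply the step property at block j
        have hzmem : z ∈ TSet a (j+1) (c j) := by
          refine ⟨sz, co, ?_, fun k hk => hnz k (Finset.mem_filter.1 hk).1, ?_, rfl⟩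
          · intro k hk
            have := (Finset.mem_filter.1 hk).2
            omega
          · omega
        obtain ⟨s', hs'sub, hs'rep⟩ := hgood j sy co z
          (fun k hk => (Finset.mem_filter.1 hk).2)
          (fun k hk => hnz k (Finset.mem_filter.1 hk).1)
          (by have := hpat j; exact this)
          hzmem hz0
          (by rw [hrep, ← hsplit])
        refine ih s' co (fun k hk => hnz k (Finset.mem_filter.1 (hs'sub hk)).1) hs'rep ?_ ?_
        · intro r
          refine le_trans (Finset.sum_le_sum_of_subset ?_) (hpat r)
          intro k hk
          rw [Finset.mem_filter] at hk ⊢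
          exact ⟨(Finset.mem_filter.1 (hs'sub hk.1)).1, hk.2⟩
        · exact le_trans (Finset.sum_le_sum_of_subset hs'sub) hwty
  -- now conclude
  intro n hgS
  obtain ⟨s₀, co, hout, hrep, hpat⟩ := S_rep a n c hmono.monotone g hgS
  set s := s₀.filter (fun k => co k ≠ 0) with hsdef
  have hrep' : g = ∑ k ∈ s, co k • a k := by
    rw [hrep]
    exact (Finset.sum_filter_of_ne (fun k _ h => by
      intro hc; exact h (by rw [hc, zero_smul]))).symm
  refine claim (∑ k ∈ s, (co k).natAbs) s co
    (fun k hk => (Finset.mem_filter.1 hk).2) hrep' (fun r => ?_) le_rfl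
  refine le_trans (Finset.sum_le_sum_of_subset ?_) (hpat r)
  intro k hk
  rw [Finset.mem_filter] at hk ⊢
  exact ⟨(Finset.mem_filter.1 hk.1).1, hk.2⟩


/-- The group filter basis built from the sets `V a c`. -/
def basis (a : ℕ → A) : AddGroupFilterBasis A where
  sets := Set.range (fun c : ℕ → ℕ => V a c)
  nonempty := ⟨V a id, ⟨id, rfl⟩⟩
  inter_sets := by
    rintro _ _ ⟨c, rfl⟩ ⟨c', rfl⟩
    refine ⟨V a (fun i => max (c i) (c' i)), ⟨_, rfl⟩, ?_⟩
    exact Set.subset_inter (V_anti a fun i => le_max_left _ _)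
      (V_anti a fun i => le_max_right _ _)
  zero' := by rintro _ ⟨c, rfl⟩; exact zero_mem_V a c
  add' := by
    rintro _ ⟨c, rfl⟩
    exact ⟨V a (fun i => max (c (2*i)) (c (2*i+1))), ⟨_, rfl⟩, V_add_V a c⟩
  neg' := by
    rintro _ ⟨c, rfl⟩
    exact ⟨V a c, ⟨c, rfl⟩, fun x hx => neg_mem_V a c hx⟩
  conj' := by
    rintro x₀ _ ⟨c, rfl⟩
    refine ⟨V a c, ⟨c, rfl⟩, fun x hx => ?_⟩
    simpa [add_comm, add_assoc] using hx

lemma backward {a : ℕ → A}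
    (hμ : ∀ h : A, h ≠ 0 → ∀ l : ℕ, ∃ m₀ : ℕ, ∀ m ≥ m₀, h ∉ TSet a l m) :
    IsTSeq a := by
  classical
  set B := basis a with hB
  letI τ := B.topology
  haveI hTG : @IsTopologicalAddGroup A τ _ := B.isTopologicalAddGroup
  have hT2 : @T2Space A τ := by
    refine @IsTopologicalAddGroup.t2Space_of_zero_sep A τ _ hTG ?_
    intro g hg
    obtain ⟨c, _, hc⟩ := main_avoid hμ hg
    refine ⟨V a c, B.mem_nhds_zero ⟨c, rfl⟩, ?_⟩
    intro hgV
    rcases Set.mem_iUnion.1 hgV with ⟨n, hn⟩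
    exact hc n hn
  refine ⟨τ, hTG, hT2, ?_⟩
  rw [(B.nhds_zero_hasBasis).tendsto_right_iff]
  rintro _ ⟨c, rfl⟩
  exact Filter.eventually_atTop.2 ⟨c 0, fun k hk => a_mem_V a c hk⟩


lemma muEx {a : ℕ → A} (hfin : ∀ k, 0 < addOrderOf (a k))
    (hyp : ∀ l n : ℕ, 0 < n → ∃ m₀ : ℕ, ∀ m ≥ m₀, {x : A | n • x = 0} ∩ TSet a l m = {0}) :
    ∀ h : A, h ≠ 0 → ∀ l : ℕ, ∃ m₀ : ℕ, ∀ m ≥ m₀, h ∉ TSet a l m := by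
  intro h hh l
  by_cases ht : ∃ n : ℕ, 0 < n ∧ n • h = 0
  · obtain ⟨n, hn, hnh⟩ := ht
    obtain ⟨m₀, hm₀⟩ := hyp l n hn
    refine ⟨m₀, fun m hm hmem => hh ?_⟩
    have hx : h ∈ {x : A | n • x = 0} ∩ TSet a l m := ⟨hnh, hmem⟩
    rw [hm₀ m hm] at hx
    exact hx
  · push_neg at ht
    refine ⟨0, fun m _ hmem => ?_⟩
    obtain ⟨N, hN, hNh⟩ := TSet_torsion hfin hmem
    exact ht N hN hNh

section Forward

variable [τ : TopologicalSpace A] [IsTopologicalAddGroup A]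

lemma sum_small (a : ℕ → A) {U : Set A} (hU : U ∈ 𝓝 (0:A)) :
    ∀ l : ℕ, ∃ W ∈ 𝓝 (0:A), ∀ (s : Finset ℕ) (co : ℕ → ℤ),
      (∀ k ∈ s, a k ∈ W) → (∀ k ∈ s, co k ≠ 0) → (∑ k ∈ s, (co k).natAbs) ≤ l →
      (∑ k ∈ s, co k • a k) ∈ U
  | 0 => by
    refine ⟨U, hU, fun s co _ hnz hwt => ?_⟩
    have hs : s = ∅ := by
      by_contra hne
      obtain ⟨k, hk⟩ := Finset.nonempty_iff_ne_empty.2 hne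
      have h1 : 1 ≤ (co k).natAbs := by have := hnz k hk; omega
      have h2 : (co k).natAbs ≤ ∑ i ∈ s, (co i).natAbs :=
        Finset.single_le_sum (f := fun i => (co i).natAbs) (fun i _ => Nat.zero_le _) hk
      omega
    rw [hs, Finset.sum_empty]
    exact mem_of_mem_nhds hU
  | (l+1) => by
    obtain ⟨Vh, hVh, hVV⟩ := exists_nhds_zero_half hU
    obtain ⟨W₁, hW₁, hW₁sum⟩ := sum_small a hVh l
    have hnegV : (Neg.neg ⁻¹' Vh : Set A) ∈ 𝓝 (0:A) :=
      continuous_neg.continuousAt.preimage_mem_nhds (by rwa [neg_zero])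
    refine ⟨W₁ ∩ Vh ∩ (Neg.neg ⁻¹' Vh), Filter.inter_mem (Filter.inter_mem hW₁ hVh) hnegV,
      fun s co hW hnz hwt => ?_⟩
    rcases Finset.eq_empty_or_nonempty s with rfl | hne
    · rw [Finset.sum_empty]; exact mem_of_mem_nhds hU
    · obtain ⟨k₀, e, s', co', hk₀, hee, hsub, hnz', hwt', hsum⟩ := peel (a := a) hne hnz
      rw [hsum]
      refine hVV _ ?_ _ (hW₁sum s' co' (fun k hk => (hW k (hsub hk)).1.1) hnz' (by omega))
      rcases hee with rfl | rfl
      · rw [one_smul]; exact (hW k₀ hk₀).1.2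
      · rw [neg_smul, one_smul]; exact (hW k₀ hk₀).2

end Forward

lemma forward {a : ℕ → A} (hA : ∀ n : ℕ, 0 < n → {x : A | n • x = 0}.Finite)
    (hT : IsTSeq a) :
    ∀ l n : ℕ, 0 < n → ∃ m₀ : ℕ, ∀ m ≥ m₀, {x : A | n • x = 0} ∩ TSet a l m = {0} := by
  obtain ⟨τ, hTG, hT2, htend⟩ := hT
  intro l n hn
  letI := τ
  haveI := hTG
  haveI := hT2
  have hKfin : ({x : A | n • x = 0} \ {0}).Finite := ((hA n hn).subset (Set.diff_subset))
  have hKcl : IsClosed ({x : A | n • x = 0} \ {0}) := hKfin.isClosed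
  have hU : ({x : A | n • x = 0} \ {0})ᶜ ∈ 𝓝 (0:A) :=
    hKcl.isOpen_compl.mem_nhds (by simp)
  obtain ⟨W, hW, hWsum⟩ := sum_small a hU l
  obtain ⟨m₀, hm₀⟩ := Filter.eventually_atTop.1 (htend hW)
  refine ⟨m₀, fun m hm => ?_⟩
  ext x
  simp only [Set.mem_inter_iff, Set.mem_singleton_iff]
  constructor
  · rintro ⟨hxK, hxT⟩
    obtain ⟨s, co, hge, hnz, hwt, rfl⟩ := hxT
    have hmem : (∑ k ∈ s, co k • a k) ∈ ({x : A | n • x = 0} \ {0})ᶜ :=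
      hWsum s co (fun k hk => hm₀ k (le_trans hm (hge k hk))) hnz hwt
    rw [Set.mem_compl_iff, Set.mem_diff] at hmem
    push_neg at hmem
    exact hmem hxK
  · rintro rfl
    exact ⟨by simp, zero_mem_TSet a l m⟩


end ZP

/-- For an almost torsion-free abelian group, a sequence of elements of finite order is a
T-sequence iff for all `l, n` there is `m₀` such that `A[n] ∩ A(l,m) = {0}` for all `m ≥ m₀`. -/
theorem stmt5 {A : Type*} [AddCommGroup A]
    (hA : ∀ n : ℕ, 0 < n → {x : A | n • x = 0}.Finite)
    (a : ℕ → A) (hfin : ∀ k, 0 < addOrderOf (a k)) :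
    IsTSeq a ↔ ∀ l n : ℕ, 0 < n → ∃ m₀ : ℕ, ∀ m ≥ m₀,
      {x : A | n • x = 0} ∩ TSet a l m = {0} := by
  constructor
  · exact fun hT => ZP.forward hA hT
  · intro hyp
    exact ZP.backward (ZP.muEx hfin hyp)
end
end

section
/- Let {a_k} be a sequence in ℤ(p^∞) with o(a_k) = p^{n_k}. If n_{k+1} − n_k → ∞, then {a_k} is a T-sequence in ℤ(p^∞). -/
open Filter Topology

noncomputable section

namespace Stmt6Aux

open Filter AddSubgroup

lemma coe_nsmul' (m : ℕ) (q : ℚ) :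
    (m • (q : AddCircle (1:ℚ))) = ((m * q : ℚ) : AddCircle (1:ℚ)) := by
  rw [← AddCircle.coe_nsmul, nsmul_eq_mul]

lemma coe_zsmul' (z : ℤ) (q : ℚ) :
    (z • (q : AddCircle (1:ℚ))) = ((z * q : ℚ) : AddCircle (1:ℚ)) := by
  rw [← AddCircle.coe_zsmul, zsmul_eq_mul]

lemma L2 (p : ℕ) (hp : 0 < p) (m : ℕ) (z : ℤ) :
    ((z / (p:ℚ)^m : ℚ) : AddCircle (1:ℚ)) = 0 ↔ (p:ℤ)^m ∣ z := by
  have hpm : ((p:ℚ))^m ≠ 0 := by positivity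
  rw [AddCircle.coe_eq_zero_iff]
  constructor
  · rintro ⟨w, hw⟩
    refine ⟨w, ?_⟩
    simp only [zsmul_eq_mul, mul_one] at hw
    have : (z : ℚ) = ((p:ℤ)^m * w : ℤ) := by push_cast; field_simp at hw ⊢; linarith
    exact_mod_cast this
  · rintro ⟨w, rfl⟩
    refine ⟨w, ?_⟩
    simp only [zsmul_eq_mul, mul_one]
    push_cast
    field_simp

lemma L1 (p : ℕ) (hp : 0 < p) (m : ℕ) (x : AddCircle (1:ℚ)) (hx : p^m • x = 0) :
    ∃ z : ℤ, x = ((z / (p:ℚ)^m : ℚ) : AddCircle (1:ℚ)) := by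
  obtain ⟨q, rfl⟩ := QuotientAddGroup.mk_surjective x
  rw [show (QuotientAddGroup.mk q : AddCircle (1:ℚ)) = (q : AddCircle (1:ℚ)) from rfl] at *
  rw [show ((p^m : ℕ) • (q : AddCircle (1:ℚ))) = (((p^m : ℕ) * q : ℚ) : AddCircle (1:ℚ))
    from coe_nsmul' _ _, AddCircle.coe_eq_zero_iff] at hx
  obtain ⟨w, hw⟩ := hx
  simp only [zsmul_eq_mul, mul_one] at hw
  refine ⟨w, ?_⟩
  congr 1
  have hpm : ((p:ℚ))^m ≠ 0 := by positivity
  push_cast at hw ⊢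
  field_simp
  linarith

noncomputable def iota : AddCircle (1:ℚ) →+ AddCircle (1:ℝ) :=
  QuotientAddGroup.map (zmultiples (1:ℚ)) (zmultiples (1:ℝ))
    (Rat.castHom ℝ).toAddMonoidHom (by
      rintro x ⟨z, hz⟩
      exact ⟨z, by push_cast [← hz]; simp⟩)

lemma iota_coe (q : ℚ) : iota (q : AddCircle (1:ℚ)) = ((q : ℝ) : AddCircle (1:ℝ)) := rfl

lemma iota_inj : Function.Injective iota := by
  rw [injective_iff_map_eq_zero]
  intro x hx
  obtain ⟨q, rfl⟩ := QuotientAddGroup.mk_surjective x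
  rw [show ((QuotientAddGroup.mk q : AddCircle (1:ℚ))) = (q : AddCircle (1:ℚ)) from rfl] at *
  rw [iota_coe, AddCircle.coe_eq_zero_iff] at hx
  obtain ⟨z, hz⟩ := hx
  rw [AddCircle.coe_eq_zero_iff]
  refine ⟨z, ?_⟩
  simp only [zsmul_eq_mul, mul_one] at hz ⊢
  exact_mod_cast hz

lemma step (p : ℕ) (hp : p.Prime) (C : ℤ) (hC : ¬ (p:ℤ) ∣ C) (m₁ m₂ : ℕ) (v : ℤ) :
    ∃ w : ℤ, (p:ℤ)^m₁ ∣ (w - v) ∧ ∃ s : ℤ, |w * C - s * (p:ℤ)^m₂| < (p:ℤ)^m₁ := by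
  have hpZ : Prime (p:ℤ) := Nat.prime_iff_prime_int.mp hp
  have hcop : IsCoprime ((p:ℤ)^m₂) C := (hpZ.coprime_iff_not_dvd.2 hC).pow_left
  obtain ⟨b, a, hab⟩ := hcop
  have hPe : (p:ℤ)^m₂ ∣ C * a - 1 := ⟨-b, by linarith⟩
  obtain ⟨e, he⟩ := hPe
  set M : ℤ := (p:ℤ)^m₁ with hM
  have hp0 : (0:ℤ) < p := by exact_mod_cast hp.pos
  have hMpos : 0 < M := by positivity
  set r : ℤ := (v*C) % M with hr
  have hr0 : 0 ≤ r := Int.emod_nonneg _ hMpos.ne'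
  have hr1 : r < M := Int.emod_lt_of_pos _ hMpos
  have hdvd : M ∣ r - v*C := by
    have h1 : M ∣ v*C - r := Int.dvd_self_sub_of_emod_eq hr.symm
    have h2 := dvd_neg.mpr h1
    rwa [neg_sub] at h2
  obtain ⟨D, hD⟩ := hdvd
  refine ⟨v + D * a * M, ⟨D * a, by ring⟩, D * M * e, ?_⟩
  have key : (v + D * a * M) * C - (D * M * e) * (p:ℤ)^m₂ = r := by
    have hCa : C * a = 1 + (p:ℤ)^m₂ * e := by linarith
    have h3 : (v + D * a * M) * C = v * C + D * M * (C * a) := by ring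
    rw [h3, hCa]
    have hMD : M * D = r - v * C := hD.symm
    nlinarith [hMD]
  rw [key, abs_of_nonneg hr0]
  exact hr1

lemma toNat_top : Tendsto Int.toNat atTop atTop := by
  refine tendsto_atTop_atTop.2 (fun b => ⟨(b:ℤ), fun m hm => ?_⟩)
  omega

lemma zpow_bot {r : ℝ} (hr : 1 < r) : Tendsto (fun m : ℤ => r ^ m) atBot (nhds 0) := by
  have h0 : (0:ℝ) < r := lt_trans one_pos hr
  have h1 : Tendsto (fun m : ℕ => r⁻¹ ^ m) atTop (nhds 0) :=
    tendsto_pow_atTop_nhds_zero_of_lt_one (by positivity) (by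
      rw [inv_lt_one_iff₀]; right; exact hr)
  have h2 : Tendsto (fun m : ℤ => (-m).toNat) atBot atTop :=
    toNat_top.comp tendsto_neg_atBot_atTop
  have h3 := h1.comp h2
  refine h3.congr' ?_
  filter_upwards [eventually_le_atBot (0:ℤ)] with m hm
  simp only [Function.comp_apply]
  rw [← zpow_natCast, Int.toNat_of_nonneg (by omega), inv_zpow, zpow_neg, inv_inv]

end Stmt6Aux
open Stmt6Aux in
/-- If `o(a_k) = p^{n_k}` and `n_{k+1} - n_k → ∞`, then `{a_k}` is a T-sequence in `ℤ(p^∞)`. -/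
theorem stmt6 (p : ℕ) (hp : p.Prime) (a : ℕ → Prufer p) (n : ℕ → ℕ)
    (hord : ∀ k, addOrderOf (a k) = p ^ n k)
    (h : Filter.Tendsto (fun k => (n (k + 1) : ℤ) - (n k : ℤ))
      Filter.atTop Filter.atTop) :
    IsTSeq a := by
  classical
  have hp0 : 0 < p := hp.pos
  have hp1 : 1 < p := hp.one_lt
  -- eventual strict growth
  obtain ⟨K₀, hK₀⟩ : ∃ K, ∀ k ≥ K, (1:ℤ) ≤ (n (k+1) : ℤ) - n k :=
    Filter.eventually_atTop.mp (h.eventually_ge_atTop 1)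
  set K₁ := K₀ + 1 with hK₁
  set N : ℕ → ℕ := fun j => n (K₁ + j) with hN
  have hNmono : StrictMono N := by
    apply strictMono_nat_of_lt_succ
    intro j
    have h1 := hK₀ (K₁ + j) (by omega)
    simp only [hN]
    have h2 : K₁ + j + 1 = K₁ + (j+1) := by omega
    rw [h2] at h1
    omega
  have hN1 : ∀ j, 1 ≤ N j := by
    intro j
    have h1 := hK₀ K₀ (le_refl _)
    have h2 : N 0 ≤ N j := hNmono.monotone (Nat.zero_le j)
    have h3 : N 0 = n (K₀ + 1) := by simp [hN, hK₁]
    rw [h3] at h2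
    omega
  have hNle : ∀ j, j ≤ N j := fun j => hNmono.le_apply
  -- each a k is killed by p ^ n k
  have hkill : ∀ k, p ^ (n k) • ((a k : AddCircle (1:ℚ))) = 0 := by
    intro k
    have h1 : addOrderOf (a k) • a k = 0 := addOrderOf_nsmul_eq_zero (a k)
    rw [hord k] at h1
    have h2 : ((p ^ n k • a k : Prufer p) : AddCircle (1:ℚ))
        = ((0 : Prufer p) : AddCircle (1:ℚ)) := by rw [h1]
    exact_mod_cast h2
  -- coefficients
  have hcoef : ∀ k, ∃ z : ℤ,
      ((a k : AddCircle (1:ℚ))) = ((z / (p:ℚ)^(n k) : ℚ) : AddCircle (1:ℚ)) ∧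
      (1 ≤ n k → ¬ (p:ℤ) ∣ z) := by
    intro k
    obtain ⟨z, hz⟩ := L1 p hp0 (n k) _ (hkill k)
    refine ⟨z, hz, ?_⟩
    rintro hnk ⟨z', rfl⟩
    have hkill' : p ^ (n k - 1) • ((a k : AddCircle (1:ℚ))) = 0 := by
      rw [hz, coe_nsmul']
      have hq : (((p ^ (n k - 1) : ℕ) : ℚ) * (((p:ℤ) * z' : ℤ) / (p:ℚ) ^ n k) : ℚ)
          = ((z' : ℚ)) := by
        have hpow : (p:ℚ) ^ n k = (p:ℚ) ^ (n k - 1) * p := by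
          rw [← pow_succ]
          congr 1
          omega
        have hpne : ((p:ℚ)) ≠ 0 := by positivity
        push_cast
        rw [hpow]
        field_simp
      rw [hq, AddCircle.coe_eq_zero_iff]
      exact ⟨z', by simp [zsmul_eq_mul]⟩
    have hsub : p ^ (n k - 1) • a k = 0 := by
      have h2 : ((p ^ (n k - 1) • a k : Prufer p) : AddCircle (1:ℚ)) = 0 := hkill'
      exact_mod_cast h2
    have hdvd := addOrderOf_dvd_of_nsmul_eq_zero hsub
    rw [hord k] at hdvd
    have hle := Nat.le_of_dvd (pow_pos hp0 _) hdvd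
    have hlt : n k - 1 < n k := by omega
    have := pow_lt_pow_right₀ hp1 hlt
    omega
  choose c hc hcu using hcoef
  -- the recursive multiplier sequence on blocks
  have hstep : ∀ (j : ℕ) (v : ℤ), ∃ w : ℤ, (p:ℤ)^(N j) ∣ (w - v) ∧
      ∃ s : ℤ, |w * c (K₁+j+1) - s * (p:ℤ)^(N (j+1))| < (p:ℤ)^(N j) := by
    intro j v
    refine step p hp _ ?_ _ _ v
    apply hcu
    have h2 : K₁ + j + 1 = K₁ + (j+1) := by omega
    rw [h2]
    exact hN1 (j+1)
  set f : ℕ → ℤ := fun j => Nat.rec 1 (fun j v => (hstep j v).choose) j with hf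
  have hf0 : f 0 = 1 := rfl
  have hfs : ∀ j, f (j+1) = (hstep j (f j)).choose := fun j => rfl
  have hfcoh1 : ∀ j, (p:ℤ)^(N j) ∣ f (j+1) - f j := by
    intro j; rw [hfs j]; exact (hstep j (f j)).choose_spec.1
  have hfsmall : ∀ j, ∃ s : ℤ, |f (j+1) * c (K₁+j+1) - s * (p:ℤ)^(N (j+1))| < (p:ℤ)^(N j) := by
    intro j; rw [hfs j]; exact (hstep j (f j)).choose_spec.2
  have hfcoh : ∀ j j', j ≤ j' → (p:ℤ)^(N j) ∣ f j' - f j := by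
    intro j j' hj
    induction j' with
    | zero => simp_all
    | succ j'' ih =>
      rcases Nat.lt_or_ge j (j''+1) with hlt | hge
      · have hj'' : j ≤ j'' := by omega
        have h1 := ih hj''
        have h2 : (p:ℤ)^(N j) ∣ f (j''+1) - f j'' :=
          dvd_trans (pow_dvd_pow _ (hNmono.monotone hj'')) (hfcoh1 j'')
        have h3 := dvd_add h2 h1
        simpa using h3
      · have he : j = j'' + 1 := by omega
        subst he
        simp
  have hfunit : ∀ j, ¬ (p:ℤ) ∣ f j := by
    intro j hdvd
    have h1 : (p:ℤ)^(N 0) ∣ f j - 1 := by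
      have h2 := hfcoh 0 j (Nat.zero_le j)
      rwa [hf0] at h2
    have h2 : (p:ℤ) ∣ f j - 1 := dvd_trans (dvd_pow_self _ (by have := hN1 0; omega)) h1
    have h3 : (p:ℤ) ∣ 1 := (dvd_sub_right hdvd).mp (by simpa using h2)
    have h4 := Int.le_of_dvd one_pos h3
    omega
  -- global multipliers
  have hJex : ∀ m : ℕ, ∃ j, m ≤ N j := fun m => ⟨m, hNle m⟩
  set J : ℕ → ℕ := fun m => Nat.find (hJex m) with hJdef
  have hJ : ∀ m, m ≤ N (J m) := fun m => Nat.find_spec (hJex m)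
  set g : ℕ → ℤ := fun m => f (J m) with hg
  have hgcoh : ∀ m j, m ≤ N j → (p:ℤ)^m ∣ f j - g m := by
    intro m j hm
    rcases le_total (J m) j with h1 | h1
    · exact dvd_trans (pow_dvd_pow _ (hJ m)) (hfcoh (J m) j h1)
    · have h2 := hfcoh j (J m) h1
      have h3 : (p:ℤ)^m ∣ f (J m) - f j := dvd_trans (pow_dvd_pow _ hm) h2
      have h4 := dvd_neg.mpr h3
      rwa [neg_sub] at h4
  have hgcoh2 : ∀ m m', m ≤ m' → (p:ℤ)^m ∣ g m' - g m := by
    intro m m' hm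
    exact hgcoh m (J m') (le_trans hm (hJ m'))
  have hgunit : ∀ m, ¬ (p:ℤ) ∣ g m := fun m => hfunit (J m)
  -- the homomorphism
  have hmem : ∀ x : Prufer p, ∃ m : ℕ, p ^ m • (x : AddCircle (1:ℚ)) = 0 := fun x => x.2
  set ord : Prufer p → ℕ := fun x => (hmem x).choose with hordd
  have hordspec : ∀ x, p ^ (ord x) • (x : AddCircle (1:ℚ)) = 0 := fun x => (hmem x).choose_spec
  have hkillmono : ∀ (x : AddCircle (1:ℚ)) (m₁ m₂ : ℕ), m₁ ≤ m₂ → p ^ m₁ • x = 0 →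
      p ^ m₂ • x = 0 := by
    intro x m₁ m₂ hm hx
    have h1 : p ^ m₂ = p ^ (m₂ - m₁) * p ^ m₁ := by
      rw [← pow_add]
      congr 1
      omega
    rw [h1, mul_smul, hx, smul_zero]
  set F : Prufer p → AddCircle (1:ℝ) := fun x => iota (g (ord x) • (x : AddCircle (1:ℚ)))
    with hF
  have hFspec : ∀ (x : Prufer p) (m : ℕ), p ^ m • (x : AddCircle (1:ℚ)) = 0 →
      F x = iota (g m • (x : AddCircle (1:ℚ))) := by
    intro x m hm
    have key : ∀ m₁ m₂ : ℕ, m₁ ≤ m₂ → p ^ m₁ • (x : AddCircle (1:ℚ)) = 0 →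
        g m₁ • (x : AddCircle (1:ℚ)) = g m₂ • (x : AddCircle (1:ℚ)) := by
      intro m₁ m₂ hle h1
      obtain ⟨d, hd⟩ := hgcoh2 m₁ m₂ hle
      have hzkill : ((p:ℤ) ^ m₁) • (x : AddCircle (1:ℚ)) = 0 := by
        have h2 : ((p:ℤ) ^ m₁) • (x : AddCircle (1:ℚ))
            = ((p ^ m₁ : ℕ)) • (x : AddCircle (1:ℚ)) := by
          rw [← natCast_zsmul]
          norm_cast
        rw [h2, h1]
      have h3 : (g m₂ - g m₁) • (x : AddCircle (1:ℚ)) = 0 := by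
        rw [hd, mul_comm, mul_smul, hzkill, smul_zero]
      rw [sub_smul] at h3
      linear_combination (norm := abel) -h3
    rcases le_total (ord x) m with h1 | h1
    · simp only [hF]
      rw [key (ord x) m h1 (hordspec x)]
    · simp only [hF]
      rw [key m (ord x) h1 hm]
  set φ : Prufer p →+ AddCircle (1:ℝ) := AddMonoidHom.mk' F (by
    intro x y
    set m := ord x + ord y with hm
    have hx : p ^ m • (x : AddCircle (1:ℚ)) = 0 :=
      hkillmono _ _ _ (by omega) (hordspec x)
    have hy : p ^ m • (y : AddCircle (1:ℚ)) = 0 :=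
      hkillmono _ _ _ (by omega) (hordspec y)
    have hxy : p ^ m • ((x + y : Prufer p) : AddCircle (1:ℚ)) = 0 := by
      push_cast
      rw [smul_add, hx, hy, add_zero]
    rw [hFspec _ m hxy, hFspec x m hx, hFspec y m hy]
    push_cast
    rw [smul_add, map_add]) with hφ
  have hφa : ∀ x : Prufer p, φ x = F x := fun _ => rfl
  have hφinj : Function.Injective φ := by
    rw [injective_iff_map_eq_zero]
    intro x hx
    have hx' : F x = 0 := hx
    rw [hFspec x (ord x) (hordspec x)] at hx'
    have h1 : g (ord x) • (x : AddCircle (1:ℚ)) = 0 := by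
      apply iota_inj
      rw [hx', map_zero]
    obtain ⟨z, hz⟩ := L1 p hp0 (ord x) _ (hordspec x)
    rw [hz, coe_zsmul'] at h1
    have h2 : ((((g (ord x) * z : ℤ) : ℚ)) / (p:ℚ)^(ord x) : ℚ) = (g (ord x) * ((z:ℚ) / (p:ℚ)^(ord x)) : ℚ) := by
      push_cast
      ring
    have h3 : ((((g (ord x) * z : ℤ) : ℚ) / (p:ℚ)^(ord x) : ℚ) : AddCircle (1:ℚ)) = 0 := by
      rw [h2]
      exact h1
    rw [L2 p hp0] at h3
    have hcop : IsCoprime ((p:ℤ)^(ord x)) (g (ord x)) :=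
      (((Nat.prime_iff_prime_int.mp hp).coprime_iff_not_dvd).2 (hgunit (ord x))).pow_left
    have h4 : (p:ℤ)^(ord x) ∣ z := hcop.dvd_of_dvd_mul_left h3
    have h5 : (x : AddCircle (1:ℚ)) = 0 := by
      rw [hz, L2 p hp0]
      exact h4
    exact_mod_cast h5
  -- main estimate
  have hest : ∀ k, K₁ + 1 ≤ k → ∃ ε : ℝ, φ (a k) = ((ε : ℝ) : AddCircle (1:ℝ)) ∧
      |ε| ≤ (p:ℝ)^(n (k-1)) / (p:ℝ)^(n k) := by
    intro k hk
    set j := k - K₁ - 1 with hj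
    have hkk : k = K₁ + j + 1 := by omega
    have hnk : n k = N (j+1) := by
      simp only [hN]
      have he : K₁ + (j+1) = k := by omega
      rw [he]
    have hnk1 : n (k-1) = N j := by
      simp only [hN]
      have he : K₁ + j = k - 1 := by omega
      rw [he]
    obtain ⟨s, hs⟩ := hfsmall j
    obtain ⟨d, hd⟩ := hgcoh (n k) (j+1) (le_of_eq hnk)
    set s' : ℤ := s - d * c k with hs'
    have hck : c (K₁ + j + 1) = c k := by rw [← hkk]
    have heq : g (n k) * c k - s' * (p:ℤ)^(n k)
        = f (j+1) * c (K₁+j+1) - s * (p:ℤ)^(N (j+1)) := by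
      rw [hck, ← hnk, hs']
      linear_combination (-(c k)) * hd
    have hsmall2 : |g (n k) * c k - s' * (p:ℤ)^(n k)| < (p:ℤ)^(n (k-1)) := by
      rw [heq, hnk1]
      exact hs
    -- compute φ (a k)
    have hφak : φ (a k) = (((((g (n k) * c k : ℤ) : ℚ) / (p:ℚ)^(n k) : ℚ) : ℝ) : AddCircle (1:ℝ)) := by
      rw [hφa, hFspec (a k) (n k) (hkill k), hc k, coe_zsmul', iota_coe]
      congr 2
      push_cast
      ring
    set P : ℝ := (p:ℝ)^(n k) with hP
    have hPpos : (0:ℝ) < P := by positivity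
    set ε : ℝ := ((g (n k) * c k - s' * (p:ℤ)^(n k) : ℤ) : ℝ) / P with hε
    refine ⟨ε, ?_, ?_⟩
    · rw [hφak]
      have hsplit : (((((g (n k) * c k : ℤ) : ℚ) / (p:ℚ)^(n k) : ℚ) : ℝ)) = (s' : ℝ) + ε := by
        rw [hε]
        push_cast
        field_simp
        rw [hP]
        ring
      rw [hsplit, AddCircle.coe_add]
      have hz0 : (((s' : ℝ)) : AddCircle (1:ℝ)) = 0 := by
        rw [AddCircle.coe_eq_zero_iff]
        exact ⟨s', by simp [zsmul_eq_mul]⟩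
      rw [hz0, zero_add]
    · rw [hε, abs_div, abs_of_pos hPpos]
      rw [div_le_div_iff_of_pos_right hPpos]
      have hcast : |((g (n k) * c k - s' * (p:ℤ)^(n k) : ℤ) : ℝ)| ≤ (p:ℝ)^(n (k-1)) := by
        rw [← Int.cast_abs]
        have h6 : ((|g (n k) * c k - s' * (p:ℤ)^(n k)| : ℤ) : ℝ) ≤ (((p:ℤ)^(n (k-1)) : ℤ) : ℝ) := by
          exact_mod_cast hsmall2.le
        convert h6 using 2
        push_cast
        ring
      exact hcast
  -- convergence of φ ∘ a
  have hconv : Filter.Tendsto (fun k => φ (a k)) Filter.atTop (nhds 0) := by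
    set ε : ℕ → ℝ := fun k => if hk : K₁ + 1 ≤ k then (hest k hk).choose else 0 with hεd
    have hφe : ∀ k, K₁ + 1 ≤ k → φ (a k) = ((ε k : ℝ) : AddCircle (1:ℝ)) := by
      intro k hk
      simp only [hεd, dif_pos hk]
      exact (hest k hk).choose_spec.1
    have hεb : ∀ k, K₁ + 1 ≤ k → |ε k| ≤ (p:ℝ)^((n (k-1) : ℤ) - (n k : ℤ)) := by
      intro k hk
      simp only [hεd, dif_pos hk]
      have h1 := (hest k hk).choose_spec.2
      rwa [zpow_sub₀ (by positivity : ((p:ℝ)) ≠ 0), zpow_natCast, zpow_natCast]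
    have hexp : Filter.Tendsto (fun k => (n (k-1) : ℤ) - (n k : ℤ)) Filter.atTop Filter.atBot := by
      have h1 : Filter.Tendsto (fun k => (n k : ℤ) - (n (k+1) : ℤ)) Filter.atTop Filter.atBot := by
        have h2 := tendsto_neg_atTop_atBot.comp h
        refine h2.congr (fun k => ?_)
        simp only [Function.comp_apply]
        ring
      have h3 := h1.comp (Filter.tendsto_sub_atTop_nat 1)
      refine h3.congr' ?_
      filter_upwards [Filter.eventually_ge_atTop 1] with k hk
      simp only [Function.comp_apply]
      have h5 : k - 1 + 1 = k := by omega
      rw [h5]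
    have hgb : Filter.Tendsto (fun k => (p:ℝ)^((n (k-1) : ℤ) - (n k : ℤ))) Filter.atTop (nhds 0) :=
      (zpow_bot (by exact_mod_cast hp1)).comp hexp
    have hεtend : Filter.Tendsto ε Filter.atTop (nhds 0) := by
      apply squeeze_zero_norm' _ hgb
      filter_upwards [Filter.eventually_ge_atTop (K₁+1)] with k hk
      simpa using hεb k hk
    have hcont : Continuous ((↑) : ℝ → AddCircle (1:ℝ)) := continuous_quotient_mk'
    have h7 := (hcont.tendsto 0).comp hεtend
    have h8 : (((0:ℝ)) : AddCircle (1:ℝ)) = 0 := rfl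
    rw [h8] at h7
    refine h7.congr' ?_
    filter_upwards [Filter.eventually_ge_atTop (K₁+1)] with k hk
    exact (hφe k hk).symm
  -- assemble the topology
  letI τ : TopologicalSpace (Prufer p) := TopologicalSpace.induced φ inferInstance
  refine ⟨τ, topologicalAddGroup_induced φ, Topology.IsEmbedding.t2Space ⟨⟨rfl⟩, hφinj⟩, ?_⟩
  rw [nhds_induced, Filter.tendsto_comap_iff]
  have h9 : φ 0 = 0 := map_zero φ
  rw [h9]
  exact hconv
end
end

section
/- Let p be a prime, x a nonzero element of ℤ(p^∞), {n_k} an increasing sequence of positive integers, and a_k = −x + e_{n_k} where e_n = 1/p^n in ℤ(p^∞) ⊆ ℚ/ℤ. Then {a_k} is a T-sequence in ℤ(p^∞) if and only if n_{k+1} − n_k → ∞. -/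
open Filter Topology

noncomputable section

namespace Stmt7Aux
open scoped Classical

/-- Map `ℚ/ℤ → ℝ/ℤ`. -/
def iota : AddCircle (1 : ℚ) →+ AddCircle (1 : ℝ) :=
  QuotientAddGroup.lift _
    ((QuotientAddGroup.mk' (AddSubgroup.zmultiples (1 : ℝ))).comp
      (Rat.castHom ℝ).toAddMonoidHom) (by
    intro q hq
    rw [AddMonoidHom.mem_ker]
    obtain ⟨z, hz⟩ := hq
    simp only [AddMonoidHom.comp_apply, RingHom.toAddMonoidHom_eq_coe,
      AddMonoidHom.coe_coe, QuotientAddGroup.mk'_apply, QuotientAddGroup.eq_zero_iff]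
    refine ⟨z, ?_⟩
    simp only [zsmul_eq_mul, mul_one] at hz ⊢
    rw [← hz]; simp)

lemma iota_mk (q : ℚ) : iota ((q : AddCircle (1 : ℚ))) = ((q : ℝ) : AddCircle (1 : ℝ)) := rfl

lemma iota_injective : Function.Injective iota := by
  rw [injective_iff_map_eq_zero]
  intro y hy
  induction y using QuotientAddGroup.induction_on with
  | H q =>
    have hy' : (((q : ℝ)) : AddCircle (1 : ℝ)) = 0 := hy
    rw [QuotientAddGroup.eq_zero_iff] at hy' ⊢
    obtain ⟨z, hz⟩ := hy'
    refine ⟨z, ?_⟩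
    simp only [zsmul_eq_mul, mul_one] at hz ⊢
    exact_mod_cast hz


variable (p b N : ℕ) (n : ℕ → ℕ) (K : ℕ)

/-- digit sequence of the p-adic integer `u`. -/
def dg (i : ℕ) : ℕ :=
  if i = 0 then 1
  else if h : ∃ k, K ≤ k ∧ n k - N ≤ i ∧ i < n k then
    b / p ^ (i + N - n (Classical.choose h)) % p
  else 0

/-- `u mod p^m`. -/
def Ufun (m : ℕ) : ℕ := ∑ i ∈ Finset.range m, dg p b N n K i * p ^ i

variable {p b N n K}
variable (hp : p.Prime) (hN : 1 ≤ N) (hbN : b < p ^ N) (hmono : StrictMono n)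
  (hgap : ∀ k, K ≤ k → n k + N ≤ n (k + 1)) (hK : 2 * N ≤ n K)

section
include hmono hgap

lemma n_add {k k' : ℕ} (hk : K ≤ k) (h : k < k') : n k + N ≤ n k' :=
  le_trans (hgap k hk) (hmono.monotone h)

lemma window_unique {k k' i : ℕ} (hk : K ≤ k) (hk' : K ≤ k')
    (h1 : n k - N ≤ i) (h2 : i < n k) (h1' : n k' - N ≤ i) (h2' : i < n k') : k = k' := by
  by_contra hne
  rcases Nat.lt_or_ge k k' with h | h
  · have := n_add hmono hgap hk h
    omega
  · have hlt : k' < k := by omega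
    have := n_add hmono hgap hk' hlt
    omega

include hK hN

lemma dg_window {k i : ℕ} (hk : K ≤ k) (h1 : n k - N ≤ i) (h2 : i < n k) :
    dg p b N n K i = b / p ^ (i + N - n k) % p := by
  have hnK : n K ≤ n k := hmono.monotone hk
  have hi0 : i ≠ 0 := by omega
  have hex : ∃ k, K ≤ k ∧ n k - N ≤ i ∧ i < n k := ⟨k, hk, h1, h2⟩
  rw [dg, if_neg hi0, dif_pos hex]
  obtain ⟨hk0, h10, h20⟩ := Classical.choose_spec hex
  rw [window_unique hmono hgap hk0 hk h10 h20 h1 h2]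

end

lemma dg_out {i : ℕ} (hi0 : i ≠ 0)
    (h : ∀ k, K ≤ k → ¬(n k - N ≤ i ∧ i < n k)) : dg p b N n K i = 0 := by
  rw [dg, if_neg hi0, dif_neg]
  rintro ⟨k, hk, h1, h2⟩
  exact h k hk ⟨h1, h2⟩

include hp in
lemma dg_le (i : ℕ) : dg p b N n K i ≤ p - 1 := by
  have h2 := hp.two_le
  rw [dg]
  split
  · omega
  · split
    · exact Nat.le_pred_of_lt (Nat.mod_lt _ hp.pos)
    · omega

include hp in
lemma Ufun_lt (m : ℕ) : Ufun p b N n K m < p ^ m := by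
  induction m with
  | zero => simp [Ufun]
  | succ m ih =>
    have hd : dg p b N n K m ≤ p - 1 := dg_le hp m
    have h1 : dg p b N n K m * p ^ m ≤ (p - 1) * p ^ m := Nat.mul_le_mul_right _ hd
    have h3 : (p - 1) * p ^ m = p * p ^ m - p ^ m := Nat.sub_one_mul p (p ^ m)
    have h4 : p ^ m ≤ p * p ^ m := Nat.le_mul_of_pos_left _ hp.pos
    have h5 : p ^ (m + 1) = p * p ^ m := by rw [pow_succ, mul_comm]
    have h6 : Ufun p b N n K (m + 1) = Ufun p b N n K m + dg p b N n K m * p ^ m :=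
      Finset.sum_range_succ _ m
    omega


lemma Ufun_mono {m m' : ℕ} (h : m ≤ m') : Ufun p b N n K m ≤ Ufun p b N n K m' :=
  Finset.sum_le_sum_of_subset (Finset.range_subset_range.2 h)

lemma Ufun_split {m m' : ℕ} (h : m ≤ m') :
    Ufun p b N n K m' = Ufun p b N n K m + ∑ i ∈ Finset.Ico m m', dg p b N n K i * p ^ i := by
  rw [Ufun, Ufun, ← Finset.sum_range_add_sum_Ico _ h]

lemma Ufun_dvd_sub {m m' : ℕ} (h : m ≤ m') :
    p ^ m ∣ Ufun p b N n K m' - Ufun p b N n K m := by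
  rw [Ufun_split (b := b) h, Nat.add_sub_cancel_left]
  refine Finset.dvd_sum fun i hi => ?_
  obtain ⟨h1, _⟩ := Finset.mem_Ico.1 hi
  exact Dvd.dvd.mul_left (pow_dvd_pow p h1) _

lemma Ufun_one : Ufun p b N n K 1 = 1 := by simp [Ufun, dg]

include hp in
lemma not_dvd_Ufun {m : ℕ} (hm : 1 ≤ m) : ¬ p ∣ Ufun p b N n K m := by
  intro hdvd
  have h1 : p ∣ Ufun p b N n K m - Ufun p b N n K 1 := by
    have := Ufun_dvd_sub (p := p) (b := b) (N := N) (n := n) (K := K) hm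
    rwa [pow_one] at this
  have h2 : Ufun p b N n K 1 ≤ Ufun p b N n K m := Ufun_mono hm
  have h3 : p ∣ Ufun p b N n K m - (Ufun p b N n K m - Ufun p b N n K 1) :=
    Nat.dvd_sub hdvd h1
  rw [Nat.sub_sub_self h2, Ufun_one] at h3
  exact hp.one_lt.ne' (Nat.dvd_one.mp h3)

lemma digit_sum (c : ℕ) : ∀ m, ∑ j ∈ Finset.range m, c / p ^ j % p * p ^ j = c % p ^ m := by
  intro m
  induction m with
  | zero => simp [Nat.mod_one]
  | succ m ih =>
    rw [Finset.sum_range_succ, ih, Nat.mod_pow_succ]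
    ring


include hp hN hbN hmono hgap hK in
lemma Ufun_window {k : ℕ} (hk : K ≤ k) :
    Ufun p b N n K (n k) = Ufun p b N n K (n k - N) + b * p ^ (n k - N) := by
  have hnKk : n K ≤ n k := hmono.monotone hk
  have hNnk : N ≤ n k := by omega
  rw [Ufun_split (show n k - N ≤ n k by omega)]
  congr 1
  rw [Finset.sum_Ico_eq_sum_range]
  have hlen : n k - (n k - N) = N := by omega
  rw [hlen]
  have heq : ∀ j ∈ Finset.range N, dg p b N n K (n k - N + j) * p ^ (n k - N + j)
      = (b / p ^ j % p * p ^ j) * p ^ (n k - N) := by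
    intro j hj
    have hjN : j < N := Finset.mem_range.1 hj
    have hdg := dg_window (p := p) (b := b) hN hmono hgap hK hk (i := n k - N + j) (by omega) (by omega)
    have hexp : n k - N + j + N - n k = j := by omega
    rw [hdg, hexp, pow_add]
    ring
  rw [Finset.sum_congr rfl heq, ← Finset.sum_mul, digit_sum, Nat.mod_eq_of_lt hbN]

include hN hmono hgap hK in
lemma Ufun_gap {k : ℕ} (hk : K ≤ k) :
    Ufun p b N n K (n (k + 1) - N) = Ufun p b N n K (n k) := by
  have hg := hgap k hk
  have hnKk : n K ≤ n k := hmono.monotone hk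
  have h1 : n k ≤ n (k + 1) - N := by omega
  rw [Ufun_split (b := b) h1]
  have hz : ∀ i ∈ Finset.Ico (n k) (n (k + 1) - N), dg p b N n K i * p ^ i = 0 := by
    intro i hi
    obtain ⟨hi1, hi2⟩ := Finset.mem_Ico.1 hi
    have hd0 : dg p b N n K i = 0 := by
      apply dg_out (by omega)
      rintro k' hk' ⟨hw1, hw2⟩
      rcases Nat.lt_or_ge k' (k + 1) with h | h
      · have : n k' ≤ n k := hmono.monotone (by omega)
        omega
      · have : n (k + 1) ≤ n k' := hmono.monotone h
        omega
    rw [hd0, zero_mul]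
  rw [Finset.sum_congr rfl hz]
  simp

include hN hmono hK in
lemma Ufun_N : Ufun p b N n K N = 1 := by
  rw [Ufun_split (show (1 : ℕ) ≤ N from hN), Ufun_one]
  have hz : ∀ i ∈ Finset.Ico 1 N, dg p b N n K i * p ^ i = 0 := by
    intro i hi
    obtain ⟨hi1, hi2⟩ := Finset.mem_Ico.1 hi
    have hd0 : dg p b N n K i = 0 := by
      apply dg_out (by omega)
      rintro k hk ⟨hw1, hw2⟩
      have : n K ≤ n k := hmono.monotone hk
      omega
    rw [hd0, zero_mul]
  rw [Finset.sum_congr rfl hz]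
  simp

include hp hN hbN hmono hgap hK in
lemma Ufun_rec {k : ℕ} (hk : K ≤ k) :
    Ufun p b N n K (n (k + 1)) = Ufun p b N n K (n k) + b * p ^ (n (k + 1) - N) := by
  rw [Ufun_window hp hN hbN hmono hgap hK (show K ≤ k + 1 by omega),
    Ufun_gap hN hmono hgap hK hk]


variable (p b N n K)

/-- The character attached to the p-adic integer with digits `dg`. -/
def chi (y : Prufer p) : AddCircle (1 : ℝ) :=
  iota (Ufun p b N n K (Nat.find (y.2 : ∃ m : ℕ, p ^ m • (y : AddCircle (1 : ℚ)) = 0))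
    • (y : AddCircle (1 : ℚ)))

variable {p b N n K}

lemma smul_eq_of_witness {y : AddCircle (1 : ℚ)} {m m' : ℕ} (h : m ≤ m')
    (hm : p ^ m • y = 0) :
    Ufun p b N n K m' • y = Ufun p b N n K m • y := by
  obtain ⟨t, ht⟩ := Ufun_dvd_sub (p := p) (b := b) (N := N) (n := n) (K := K) h
  have hle : Ufun p b N n K m ≤ Ufun p b N n K m' := Ufun_mono h
  have heq : Ufun p b N n K m' = Ufun p b N n K m + p ^ m * t := by omega
  rw [heq, add_nsmul, mul_nsmul, hm, smul_zero, add_zero]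

lemma chi_spec (y : Prufer p) (m : ℕ) (hm : p ^ m • (y : AddCircle (1 : ℚ)) = 0) :
    chi p b N n K y = iota (Ufun p b N n K m • (y : AddCircle (1 : ℚ))) := by
  rw [chi]
  have hm0 := Nat.find_spec (y.2 : ∃ m : ℕ, p ^ m • (y : AddCircle (1 : ℚ)) = 0)
  rcases le_total m (Nat.find (y.2 : ∃ m : ℕ, p ^ m • (y : AddCircle (1 : ℚ)) = 0)) with h | h
  · rw [smul_eq_of_witness h hm]
  · rw [smul_eq_of_witness h hm0]

lemma witness_mono {c : AddCircle (1 : ℚ)} {m m' : ℕ} (h : m ≤ m') (hm : p ^ m • c = 0) :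
    p ^ m' • c = 0 := by
  have h2 : p ^ m' = p ^ m * p ^ (m' - m) := (pow_mul_pow_sub p h).symm
  rw [h2, mul_nsmul, hm, smul_zero]

variable (p b N n K)

/-- `chi` as an additive homomorphism. -/
def chiHom : Prufer p →+ AddCircle (1 : ℝ) :=
  AddMonoidHom.mk' (chi p b N n K) (by
    intro y z
    obtain ⟨my, hmy⟩ := (y.2 : ∃ m : ℕ, p ^ m • (y : AddCircle (1 : ℚ)) = 0)
    obtain ⟨mz, hmz⟩ := (z.2 : ∃ m : ℕ, p ^ m • (z : AddCircle (1 : ℚ)) = 0)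
    have hy : p ^ (my + mz) • (y : AddCircle (1 : ℚ)) = 0 :=
      witness_mono (Nat.le_add_right _ _) hmy
    have hz : p ^ (my + mz) • (z : AddCircle (1 : ℚ)) = 0 :=
      witness_mono (Nat.le_add_left _ _) hmz
    have hyz : p ^ (my + mz) • ((y + z : Prufer p) : AddCircle (1 : ℚ)) = 0 := by
      rw [AddSubgroup.coe_add, smul_add, hy, hz, add_zero]
    rw [chi_spec (y + z) (my + mz) hyz, chi_spec y (my + mz) hy, chi_spec z (my + mz) hz,
      AddSubgroup.coe_add, smul_add, map_add])

variable {p b N n K}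

lemma chiHom_apply (y : Prufer p) : chiHom p b N n K y = chi p b N n K y := rfl

include hp in
lemma chiHom_injective : Function.Injective (chiHom p b N n K) := by
  rw [injective_iff_map_eq_zero]
  intro y hy
  obtain ⟨m, hm⟩ := (y.2 : ∃ m : ℕ, p ^ m • (y : AddCircle (1 : ℚ)) = 0)
  rcases Nat.eq_zero_or_pos m with rfl | hm1
  · rw [pow_zero, one_smul] at hm
    exact Subtype.ext hm
  · rw [chiHom_apply, chi_spec y m hm] at hy
    have h0 : Ufun p b N n K m • (y : AddCircle (1 : ℚ)) = 0 := by
      apply iota_injective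
      rw [hy, map_zero]
    have h1 : addOrderOf (y : AddCircle (1 : ℚ)) ∣ Ufun p b N n K m :=
      addOrderOf_dvd_of_nsmul_eq_zero h0
    have h2 : addOrderOf (y : AddCircle (1 : ℚ)) ∣ p ^ m :=
      addOrderOf_dvd_of_nsmul_eq_zero hm
    obtain ⟨j, hj, hje⟩ := (Nat.dvd_prime_pow hp).mp h2
    rcases Nat.eq_zero_or_pos j with rfl | hj1
    · rw [pow_zero] at hje
      have hy0 : (y : AddCircle (1 : ℚ)) = 0 := AddMonoid.addOrderOf_eq_one_iff.mp hje
      exact Subtype.ext hy0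
    · exfalso
      apply not_dvd_Ufun hp (b := b) (N := N) (n := n) (K := K) hm1
      calc p ∣ p ^ j := dvd_pow_self p (by omega)
        _ = addOrderOf (y : AddCircle (1 : ℚ)) := hje.symm
        _ ∣ Ufun p b N n K m := h1


lemma eP_coe (m : ℕ) :
    ((eP p m : Prufer p) : AddCircle (1 : ℚ)) = ((((p : ℚ) ^ m)⁻¹ : ℚ) : AddCircle (1 : ℚ)) := rfl

include hp in
lemma eP_nsmul (m : ℕ) : p ^ m • ((eP p m : Prufer p) : AddCircle (1 : ℚ)) = 0 := by
  have hpq : ((p : ℚ) ^ m) ≠ 0 := pow_ne_zero _ (Nat.cast_ne_zero.2 hp.pos.ne')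
  rw [eP_coe, ← AddCircle.coe_nsmul]
  have key : (p ^ m : ℕ) • (((p : ℚ) ^ m)⁻¹ : ℚ) = (1 : ℚ) := by
    rw [nsmul_eq_mul]; push_cast; field_simp
  rw [key]
  exact AddCircle.coe_period 1

include hp in
lemma chi_eP (m : ℕ) :
    chi p b N n K (eP p m)
      = iota (((Ufun p b N n K m / p ^ m : ℚ)) : AddCircle (1 : ℚ)) := by
  have hpq : ((p : ℚ) ^ m) ≠ 0 := pow_ne_zero _ (Nat.cast_ne_zero.2 hp.pos.ne')
  rw [chi_spec _ m (eP_nsmul hp m), eP_coe, ← AddCircle.coe_nsmul]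
  congr 2

include hp hN hmono hK in
lemma chi_x {x : Prufer p}
    (hxe : (x : AddCircle (1 : ℚ)) = (((b : ℚ) / p ^ N : ℚ) : AddCircle (1 : ℚ))) :
    chi p b N n K x = iota ((((b : ℚ) / p ^ N : ℚ)) : AddCircle (1 : ℚ)) := by
  have hpq : ((p : ℚ) ^ N) ≠ 0 := pow_ne_zero _ (Nat.cast_ne_zero.2 hp.pos.ne')
  have hw : p ^ N • (x : AddCircle (1 : ℚ)) = 0 := by
    rw [hxe, ← AddCircle.coe_nsmul]
    have key : (p ^ N : ℕ) • ((b : ℚ) / p ^ N) = (b : ℚ) := by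
      rw [nsmul_eq_mul]; push_cast; field_simp
    rw [key]
    rw [AddCircle.coe_eq_zero_iff]
    exact ⟨b, by simp⟩
  rw [chi_spec x N hw, Ufun_N hN hmono hK, one_smul, hxe]

include hp in
lemma exists_rep (x : Prufer p) (hx : x ≠ 0) :
    ∃ (N b : ℕ), 1 ≤ N ∧ 0 < b ∧ b < p ^ N ∧
      (x : AddCircle (1 : ℚ)) = (((b : ℚ) / p ^ N : ℚ) : AddCircle (1 : ℚ)) := by
  obtain ⟨m, hm⟩ := (x.2 : ∃ m : ℕ, p ^ m • (x : AddCircle (1 : ℚ)) = 0)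
  rcases Nat.eq_zero_or_pos m with rfl | hm1
  · rw [pow_zero, one_smul] at hm
    exact absurd (Subtype.ext hm) hx
  obtain ⟨q, hq⟩ := QuotientAddGroup.mk_surjective (x : AddCircle (1 : ℚ))
  have hq' : (q : AddCircle (1 : ℚ)) = (x : AddCircle (1 : ℚ)) := hq
  have hpq : ((p : ℚ) ^ m) ≠ 0 := pow_ne_zero _ (Nat.cast_ne_zero.2 hp.pos.ne')
  rw [← hq', ← AddCircle.coe_nsmul, AddCircle.coe_eq_zero_iff] at hm
  obtain ⟨z, hz⟩ := hm
  have hzq : (z : ℚ) = p ^ m * q := by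
    have := hz
    simp only [zsmul_eq_mul, mul_one] at this
    rw [this, nsmul_eq_mul]
    push_cast
    ring
  have hqz : q = (z : ℚ) / p ^ m := by
    rw [hzq]; field_simp
  have hppos : (0 : ℤ) < (p : ℤ) := by exact_mod_cast hp.pos
  have hpmz : (0 : ℤ) < (p : ℤ) ^ m := by positivity
  set b : ℕ := (z % (p : ℤ) ^ m).toNat with hbdef
  have he1 : (0 : ℤ) ≤ z % (p : ℤ) ^ m := Int.emod_nonneg z (ne_of_gt hpmz)
  have he2 : z % (p : ℤ) ^ m < (p : ℤ) ^ m := Int.emod_lt_of_pos z hpmz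
  have hbz : (b : ℤ) = z % (p : ℤ) ^ m := Int.toNat_of_nonneg he1
  have hkey : (q : AddCircle (1 : ℚ)) = (((b : ℚ) / p ^ m : ℚ) : AddCircle (1 : ℚ)) := by
    have hdiff : q - (b : ℚ) / p ^ m = ((z / (p : ℤ) ^ m : ℤ) : ℚ) := by
      have hmod : (z % (p : ℤ) ^ m) = z - (p : ℤ) ^ m * (z / (p : ℤ) ^ m) := Int.emod_def z _
      rw [hqz]
      have hb2 : (b : ℚ) = ((z % (p : ℤ) ^ m : ℤ) : ℚ) := by exact_mod_cast congrArg (Int.cast : ℤ → ℚ) hbz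
      rw [hb2, hmod]
      push_cast
      field_simp
      ring
    have : (q : AddCircle (1 : ℚ)) - (((b : ℚ) / p ^ m : ℚ) : AddCircle (1 : ℚ)) = 0 := by
      rw [← AddCircle.coe_sub, hdiff, AddCircle.coe_eq_zero_iff]
      exact ⟨z / (p : ℤ) ^ m, by simp⟩
    exact sub_eq_zero.mp this
  have hb0 : 0 < b := by
    rcases Nat.eq_zero_or_pos b with hb | hb
    · exfalso
      apply hx
      apply Subtype.ext
      rw [← hq', hkey, hb]
      norm_num
    · exact hb
  refine ⟨m, b, hm1, hb0, ?_, by rw [← hq', hkey]⟩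
  have : (b : ℤ) < (p : ℤ) ^ m := hbz ▸ he2
  exact_mod_cast this


include hp in
lemma eP_pow_smul (m g : ℕ) : p ^ g • eP p (m + g) = eP p m := by
  apply Subtype.ext
  have hco : ((p ^ g • eP p (m + g) : Prufer p) : AddCircle (1 : ℚ))
      = p ^ g • ((eP p (m + g) : Prufer p) : AddCircle (1 : ℚ)) := rfl
  rw [hco, eP_coe, eP_coe, ← AddCircle.coe_nsmul]
  congr 1
  have hpq : ((p : ℚ)) ≠ 0 := Nat.cast_ne_zero.2 hp.pos.ne'
  rw [nsmul_eq_mul]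
  push_cast
  rw [pow_add]
  field_simp

end Stmt7Aux

/-- For `x ≠ 0` in `ℤ(p^∞)` and an increasing sequence `{n_k}` of positive integers, the
sequence `a_k = -x + e_{n_k}` is a T-sequence iff `n_{k+1} - n_k → ∞`. -/
theorem stmt7 (p : ℕ) (hp : p.Prime) (x : Prufer p) (hx : x ≠ 0)
    (n : ℕ → ℕ) (hmono : StrictMono n) (hpos : ∀ k, 0 < n k)
    (a : ℕ → Prufer p) (ha : ∀ k, a k = -x + eP p (n k)) :
    IsTSeq a ↔ Filter.Tendsto (fun k => (n (k + 1) : ℤ) - (n k : ℤ))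
      Filter.atTop Filter.atTop := by
  constructor
  · rintro ⟨τ, hτg, hτ2, hconv⟩
    letI := τ
    haveI := hτg
    haveI := hτ2
    by_contra hnot
    rw [tendsto_atTop] at hnot
    push_neg at hnot
    obtain ⟨C, hC⟩ := hnot
    have hC' : ∃ᶠ k in atTop, (n (k + 1) : ℤ) - (n k : ℤ) < C := hC.mono (by intro k h; omega)
    set M := C.toNat with hM
    have hfreq : ∃ᶠ k in atTop, n (k + 1) - n k < M := by
      refine hC'.mono ?_
      intro k h
      have h1 : n k < n (k + 1) := hmono (Nat.lt_succ_self k)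
      omega
    have hpig : ∃ g, g < M ∧ ∃ᶠ k in atTop, n (k + 1) - n k = g := by
      by_contra h
      push_neg at h
      have hev : ∀ g ∈ Finset.range M, ∀ᶠ k in atTop, n (k + 1) - n k ≠ g := by
        intro g hg
        exact h g (Finset.mem_range.mp hg)
      rw [← eventually_all_finset] at hev
      obtain ⟨k, hk1, hk2⟩ := (hfreq.and_eventually hev).exists
      exact hk2 (n (k + 1) - n k) (Finset.mem_range.2 hk1) rfl
    obtain ⟨g, hgM, hgfreq⟩ := hpig
    have hg1 : 1 ≤ g := by
      obtain ⟨k, hk⟩ := hgfreq.exists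
      have h1 : n k < n (k + 1) := hmono (Nat.lt_succ_self k)
      omega
    have hf1 : Tendsto (fun k => a k - a (k + 1)) atTop (nhds 0) := by
      have := hconv.sub (hconv.comp (tendsto_add_atTop_nat 1))
      simpa only [sub_self, Function.comp_def] using this
    have hxlim : Tendsto (fun k => x + a (k + 1)) atTop (nhds x) := by
      have := (tendsto_const_nhds (x := x) (f := atTop)).add (hconv.comp (tendsto_add_atTop_nat 1))
      simpa only [add_zero, Function.comp_def] using this
    have hf2 : Tendsto (fun k => (p ^ g - 1) • (x + a (k + 1))) atTop
        (nhds ((p ^ g - 1) • x)) :=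
      ((continuous_nsmul (p ^ g - 1)).tendsto x).comp hxlim
    have hfeq : ∃ᶠ k in atTop, a k - a (k + 1) = (p ^ g - 1) • (x + a (k + 1)) := by
      refine hgfreq.mono ?_
      intro k hk
      have h1 : n k < n (k + 1) := hmono (Nat.lt_succ_self k)
      have hnk : n (k + 1) = n k + g := by omega
      have hsm : p ^ g • eP p (n (k + 1)) = eP p (n k) := by
        rw [hnk]; exact Stmt7Aux.eP_pow_smul hp (n k) g
      have hpg1 : 1 ≤ p ^ g := Nat.one_le_pow _ _ hp.pos
      have hsplit : (p ^ g - 1) • eP p (n (k + 1)) = eP p (n k) - eP p (n (k + 1)) := by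
        have h2 : p ^ g = (p ^ g - 1) + 1 := by omega
        rw [h2, add_nsmul, one_nsmul] at hsm
        rw [← hsm]
        abel
      rw [ha k, ha (k + 1)]
      have hcol : x + (-x + eP p (n (k + 1))) = eP p (n (k + 1)) := by abel
      rw [hcol, hsplit]
      abel
    have huniq : (0 : Prufer p) = (p ^ g - 1) • x :=
      tendsto_nhds_unique_of_frequently_eq hf1 hf2 hfeq
    obtain ⟨m, hm⟩ := (x.2 : ∃ m : ℕ, p ^ m • (x : AddCircle (1 : ℚ)) = 0)
    have hmS : p ^ m • x = 0 := by
      apply Subtype.ext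
      exact hm
    have h1 : addOrderOf x ∣ p ^ g - 1 := addOrderOf_dvd_of_nsmul_eq_zero huniq.symm
    have h2 : addOrderOf x ∣ p ^ m := addOrderOf_dvd_of_nsmul_eq_zero hmS
    obtain ⟨j, hj, hje⟩ := (Nat.dvd_prime_pow hp).mp h2
    rcases Nat.eq_zero_or_pos j with rfl | hj1
    · rw [pow_zero] at hje
      exact hx (AddMonoid.addOrderOf_eq_one_iff.mp hje)
    · have hd1 : p ∣ p ^ g - 1 := by
        calc p ∣ p ^ j := dvd_pow_self p (by omega)
          _ = addOrderOf x := hje.symm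
          _ ∣ p ^ g - 1 := h1
      have hd2 : p ∣ p ^ g := dvd_pow_self p (by omega)
      have hpg1 : 1 ≤ p ^ g := Nat.one_le_pow _ _ hp.pos
      have hd3 : p ∣ 1 := by
        have := Nat.dvd_sub hd2 hd1
        rwa [Nat.sub_sub_self hpg1] at this
      exact hp.one_lt.ne' (Nat.dvd_one.mp hd3)
  · intro hg
    obtain ⟨N, b, hN, hb0, hbN, hxe⟩ := Stmt7Aux.exists_rep hp x hx
    have hev : ∀ᶠ k in atTop, (N : ℤ) ≤ (n (k + 1) : ℤ) - n k := hg.eventually_ge_atTop _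
    obtain ⟨K₀, hK₀⟩ := eventually_atTop.mp hev
    set K := max K₀ (2 * N) with hKdef
    have hgap : ∀ k, K ≤ k → n k + N ≤ n (k + 1) := by
      intro k hk
      have h1 := hK₀ k (le_trans (le_max_left _ _) hk)
      have h2 : n k < n (k + 1) := hmono (Nat.lt_succ_self k)
      omega
    have hK2N : 2 * N ≤ n K := le_trans (le_max_right _ _) hmono.le_apply
    set χ := Stmt7Aux.chiHom p b N n K with hχ
    letI τ : TopologicalSpace (Prufer p) := TopologicalSpace.induced χ inferInstance
    have hEmb : Topology.IsEmbedding χ := ⟨⟨rfl⟩, Stmt7Aux.chiHom_injective hp⟩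
    refine ⟨τ, topologicalAddGroup_induced χ, hEmb.t2Space, ?_⟩
    rw [nhds_induced]
    rw [show χ (0 : Prufer p) = 0 from map_zero χ]
    rw [tendsto_comap_iff]
    have hshift : ∀ (f : ℕ → AddCircle (1 : ℝ)),
        Tendsto (fun k => f (k + 1)) atTop (nhds 0) → Tendsto f atTop (nhds 0) :=
      fun f hf => (tendsto_add_atTop_iff_nat 1).mp hf
    apply hshift
    -- the real bound sequence
    have hppos : (0 : ℝ) < (p : ℝ) := by exact_mod_cast hp.pos
    have hp1 : (1 : ℝ) < (p : ℝ) := by exact_mod_cast hp.one_lt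
    have hgnat : Tendsto (fun k => n (k + 1) - n k) atTop atTop := by
      rw [tendsto_atTop]
      intro c
      refine (hg.eventually_ge_atTop (c : ℤ)).mono ?_
      intro k hk
      have h2 : n k < n (k + 1) := hmono (Nat.lt_succ_self k)
      omega
    have hrlim : Tendsto (fun k => ((p : ℝ)⁻¹) ^ (n (k + 1) - n k)) atTop (nhds 0) :=
      (tendsto_pow_atTop_nhds_zero_of_lt_one (by positivity) (inv_lt_one_of_one_lt₀ hp1)).comp hgnat
    have hUlim : Tendsto
        (fun k => ((Stmt7Aux.Ufun p b N n K (n k) : ℝ) / (p : ℝ) ^ (n (k + 1))))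
        atTop (nhds 0) := by
      refine tendsto_of_tendsto_of_tendsto_of_le_of_le tendsto_const_nhds hrlim ?_ ?_
      · intro k
        positivity
      · intro k
        have h2 : n k ≤ n (k + 1) := le_of_lt (hmono (Nat.lt_succ_self k))
        have hUlt : (Stmt7Aux.Ufun p b N n K (n k) : ℝ) ≤ (p : ℝ) ^ (n k) := by
          have := Stmt7Aux.Ufun_lt (b := b) (N := N) (n := n) (K := K) hp (n k)
          have hc : (Stmt7Aux.Ufun p b N n K (n k) : ℝ) < ((p ^ (n k) : ℕ) : ℝ) := by
            exact_mod_cast this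
          push_cast at hc
          linarith
        have hpow2 : (p : ℝ) ^ (n (k + 1) - n k) * (p : ℝ) ^ (n k) = (p : ℝ) ^ (n (k + 1)) := by
          rw [← pow_add]
          congr 1
          omega
        have hden : (0 : ℝ) < (p : ℝ) ^ (n (k + 1)) := by positivity
        rw [div_le_iff₀ hden]
        calc (Stmt7Aux.Ufun p b N n K (n k) : ℝ) ≤ (p : ℝ) ^ (n k) := hUlt
          _ = ((p : ℝ)⁻¹) ^ (n (k + 1) - n k) * (p : ℝ) ^ (n (k + 1)) := by
              rw [inv_pow, ← hpow2]
              field_simp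
    have hcont : Continuous (fun r : ℝ => (r : AddCircle (1 : ℝ))) := continuous_quotient_mk'
    have hmklim : Tendsto
        (fun k => (((Stmt7Aux.Ufun p b N n K (n k) : ℝ) / (p : ℝ) ^ (n (k + 1))
          : ℝ) : AddCircle (1 : ℝ))) atTop (nhds 0) := by
      have := (hcont.tendsto (0 : ℝ)).comp hUlim
      simpa [Function.comp_def] using this
    refine hmklim.congr' ?_
    filter_upwards [eventually_ge_atTop K] with k hk
    have hpqQ : ((p : ℚ)) ≠ 0 := Nat.cast_ne_zero.2 hp.pos.ne'
    have hNle : N ≤ n (k + 1) := by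
      have h1 : n K ≤ n (k + 1) := hmono.monotone (by omega)
      omega
    have hrec := Stmt7Aux.Ufun_rec hp hN hbN hmono hgap hK2N hk
    have hqe : ((Stmt7Aux.Ufun p b N n K (n (k + 1)) : ℚ) / (p : ℚ) ^ (n (k + 1)))
        - (b : ℚ) / (p : ℚ) ^ N
        = (Stmt7Aux.Ufun p b N n K (n k) : ℚ) / (p : ℚ) ^ (n (k + 1)) := by
      rw [hrec]
      have hpow : ((p : ℚ)) ^ (n (k + 1) - N) * (p : ℚ) ^ N = (p : ℚ) ^ (n (k + 1)) := by
        rw [← pow_add]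
        congr 1
        omega
      push_cast
      rw [← hpow]
      field_simp
      ring
    have hval : χ (a (k + 1)) = Stmt7Aux.iota
        ((((Stmt7Aux.Ufun p b N n K (n k) : ℚ) / (p : ℚ) ^ (n (k + 1)) : ℚ))
          : AddCircle (1 : ℚ)) := by
      rw [ha (k + 1), map_add, map_neg, hχ, Stmt7Aux.chiHom_apply, Stmt7Aux.chiHom_apply,
        Stmt7Aux.chi_x hp hN hmono hK2N hxe, Stmt7Aux.chi_eP hp]
      rw [← map_neg, ← map_add]
      congr 1
      rw [neg_add_eq_sub, ← AddCircle.coe_sub, hqe]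
    rw [Function.comp_apply, hval, Stmt7Aux.iota_mk]
    push_cast
    rfl
end
end

section
/- Let p be an odd prime. Every element y of ℤ(p^∞) admits a representation y = Σ σ_n e_n (finite sum) with integer coefficients satisfying |σ_n| ≤ (p−1)/2 for all n; moreover, if y = Σ σ_n e_n is any representation with integer coefficients, then there is such a 'canonical' representation y = Σ σ'_n e_n with Σ|σ'_n| ≤ Σ|σ_n|. -/
open Filter Topology

noncomputable section

namespace PruferAux

lemma eP_zero (p : ℕ) : eP p 0 = 0 := by
  apply Subtype.ext
  show ((((p : ℚ) ^ 0)⁻¹ : ℚ) : AddCircle (1 : ℚ)) = 0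
  norm_num

lemma p_smul_eP (p : ℕ) (hp : p ≠ 0) (n : ℕ) : (p : ℤ) • eP p (n + 1) = eP p n := by
  apply Subtype.ext
  have h1 : (((p : ℤ) • eP p (n + 1) : Prufer p) : AddCircle (1:ℚ))
      = (p : ℤ) • ((((p : ℚ) ^ (n+1))⁻¹ : ℚ) : AddCircle (1 : ℚ)) := rfl
  rw [h1]
  have h2 : (p : ℤ) • ((((p : ℚ) ^ (n+1))⁻¹ : ℚ) : AddCircle (1 : ℚ))
      = ((((p : ℤ) • ((p : ℚ) ^ (n+1))⁻¹ : ℚ)) : AddCircle (1 : ℚ)) := by norm_cast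
  rw [h2]
  show _ = ((((p : ℚ) ^ n)⁻¹ : ℚ) : AddCircle (1 : ℚ))
  congr 1
  have hq : (p : ℚ) ≠ 0 := Nat.cast_ne_zero.mpr hp
  rw [zsmul_eq_mul]
  push_cast
  field_simp
  ring

end PruferAux

namespace PruferAux

lemma sum_split {M : Type*} [AddCommMonoid M] (s : Finset ℕ) (f : ℕ → M) {a b : ℕ}
    (ha : a ∈ s) (hb : b ∈ s) (hab : a ≠ b) :
    ∑ k ∈ s, f k = f a + f b + ∑ k ∈ (s.erase a).erase b, f k := by
  rw [← Finset.add_sum_erase s f ha,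
    ← Finset.add_sum_erase _ f (Finset.mem_erase.mpr ⟨fun h => hab h.symm, hb⟩), add_assoc]

lemma arith (p : ℕ) (hp3 : 3 ≤ p) (hpodd : p % 2 = 1) (x : ℤ)
    (hviol : ¬ 2 * x.natAbs ≤ p - 1) :
    ∃ r t : ℤ, x = p * t + r ∧ 2 * r.natAbs ≤ p - 1 ∧ r.natAbs + t.natAbs ≤ x.natAbs := by
  have hp0 : (0:ℤ) < p := by exact_mod_cast (by omega : 0 < p)
  set r := x.bmod p with hrdef
  have hrem : r % (p:ℤ) = x % p := Int.bmod_emod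
  have hdvd : (p:ℤ) ∣ x - r := by
    rw [Int.dvd_iff_emod_eq_zero, Int.sub_emod, hrem, sub_self, Int.zero_emod]
  set t := (x - r) / p with htdef
  have hpt : x = p * t + r := by
    obtain ⟨c, hc⟩ := hdvd
    rw [htdef, hc, Int.mul_ediv_cancel_left _ (by positivity)]
    linarith
  have h1 := Int.le_bmod (x := x) (m := p) (by omega)
  have h2 := Int.bmod_lt (x := x) (m := p) (by omega)
  rw [← hrdef] at h1 h2
  have hr2 : 2 * r.natAbs ≤ p - 1 := by omega
  refine ⟨r, t, hpt, hr2, ?_⟩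
  have e1 : (p:ℤ) * t.natAbs ≤ (x.natAbs : ℤ) + r.natAbs := by
    have h : (p:ℤ) * t = x - r := by linarith
    have habs : (p:ℤ) * (t.natAbs : ℤ) = |(p:ℤ) * t| := by
      rw [abs_mul, abs_of_nonneg hp0.le, Int.abs_eq_natAbs]
    rw [habs, h]
    calc |x - r| ≤ |x| + |r| := abs_sub x r
      _ = (x.natAbs : ℤ) + r.natAbs := by rw [Int.abs_eq_natAbs, Int.abs_eq_natAbs]
  have e2 : 2 * (r.natAbs : ℤ) ≤ (p:ℤ) - 1 := by omega
  have e3 : (p:ℤ) + 1 ≤ 2 * (x.natAbs : ℤ) := by omega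
  have key : 2 * (p:ℤ) * ((r.natAbs : ℤ) + t.natAbs) ≤ 2 * (p:ℤ) * (x.natAbs : ℤ) := by
    have k1 : ((p:ℤ) + 1) * (2 * (r.natAbs : ℤ)) ≤ ((p:ℤ) + 1) * ((p:ℤ) - 1) :=
      mul_le_mul_of_nonneg_left e2 (by linarith)
    have k2 : ((p:ℤ) - 1) * ((p:ℤ) + 1) ≤ ((p:ℤ) - 1) * (2 * (x.natAbs : ℤ)) :=
      mul_le_mul_of_nonneg_left e3 (by linarith)
    nlinarith [e1]
  have := le_of_mul_le_mul_left key (by linarith : (0:ℤ) < 2 * p)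
  omega

lemma step_lemma (p : ℕ) (hp : p.Prime) (hodd : p ≠ 2) (σ : ℕ →₀ ℤ) (n : ℕ) (hn : 1 ≤ n)
    (hviol : ¬ 2 * (σ n).natAbs ≤ p - 1) :
    ∃ σ₂ : ℕ →₀ ℤ,
      (∀ k, n < k → σ₂ k = σ k) ∧
      2 * (σ₂ n).natAbs ≤ p - 1 ∧
      (∑ k ∈ σ₂.support, σ₂ k • eP p k) = (∑ k ∈ σ.support, σ k • eP p k) ∧
      (∑ k ∈ σ₂.support, (σ₂ k).natAbs) ≤ ∑ k ∈ σ.support, (σ k).natAbs := by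
  have hp2 := hp.two_le
  have hpodd : p % 2 = 1 := Nat.odd_iff.mp (hp.odd_of_ne_two hodd)
  have hp3 : 3 ≤ p := by omega
  obtain ⟨r, t, hpt, hr2, habs⟩ := arith p hp3 hpodd (σ n) hviol
  classical
  set σ₂ : ℕ →₀ ℤ := (σ.update n r).update (n-1) (σ (n-1) + t) with hσ₂def
  have hneq : n - 1 ≠ n := by omega
  have hval : ∀ k, σ₂ k = if k = n - 1 then σ (n-1) + t else if k = n then r else σ k := by
    intro k
    simp only [hσ₂def, Finsupp.coe_update, Function.update_apply]
  have hvn : σ₂ n = r := by rw [hval, if_neg (fun h => hneq h.symm), if_pos rfl]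
  have hv1 : σ₂ (n-1) = σ (n-1) + t := by rw [hval, if_pos rfl]
  have hvo : ∀ k, k ≠ n → k ≠ n - 1 → σ₂ k = σ k := by
    intro k h1 h2; rw [hval, if_neg h2, if_neg h1]
  set s : Finset ℕ := insert n (insert (n-1) (σ.support ∪ σ₂.support)) with hs
  have hns : n ∈ s := Finset.mem_insert_self _ _
  have h1s : n - 1 ∈ s := Finset.mem_insert_of_mem (Finset.mem_insert_self _ _)
  have hsub1 : σ.support ⊆ s := fun k hk =>
    Finset.mem_insert_of_mem (Finset.mem_insert_of_mem (Finset.mem_union_left _ hk))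
  have hsub2 : σ₂.support ⊆ s := fun k hk =>
    Finset.mem_insert_of_mem (Finset.mem_insert_of_mem (Finset.mem_union_right _ hk))
  have hrest : ∀ k ∈ (s.erase (n-1)).erase n, σ₂ k = σ k := by
    intro k hk
    obtain ⟨h1, h2⟩ := Finset.mem_erase.mp hk
    exact hvo k h1 (Finset.mem_erase.mp h2).1
  refine ⟨σ₂, ?_, ?_, ?_, ?_⟩
  · intro k hk; exact hvo k (by omega) (by omega)
  · rw [hvn]; exact hr2
  · rw [Finset.sum_subset hsub2
        (fun k _ hk => by rw [Finsupp.notMem_support_iff.mp hk, zero_smul]),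
      Finset.sum_subset hsub1
        (fun k _ hk => by rw [Finsupp.notMem_support_iff.mp hk, zero_smul]),
      sum_split s (fun k => σ₂ k • eP p k) h1s hns hneq,
      sum_split s (fun k => σ k • eP p k) h1s hns hneq]
    have hre : ∑ k ∈ (s.erase (n-1)).erase n, σ₂ k • eP p k
        = ∑ k ∈ (s.erase (n-1)).erase n, σ k • eP p k :=
      Finset.sum_congr rfl (fun k hk => by rw [hrest k hk])
    rw [hre, hv1, hvn]
    have hen : ((p:ℤ)) • eP p n = eP p (n-1) := by
      have h := p_smul_eP p hp.ne_zero (n-1)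
      rwa [Nat.sub_add_cancel hn] at h
    congr 1
    rw [add_smul, ← hen, smul_smul, hpt, add_smul, smul_smul, mul_comm t (p:ℤ)]
    abel
  · rw [Finset.sum_subset hsub2
        (fun k _ hk => by rw [Finsupp.notMem_support_iff.mp hk, Int.natAbs_zero]),
      Finset.sum_subset hsub1
        (fun k _ hk => by rw [Finsupp.notMem_support_iff.mp hk, Int.natAbs_zero]),
      sum_split s (fun k => (σ₂ k).natAbs) h1s hns hneq,
      sum_split s (fun k => (σ k).natAbs) h1s hns hneq]
    have hre : ∑ k ∈ (s.erase (n-1)).erase n, (σ₂ k).natAbs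
        = ∑ k ∈ (s.erase (n-1)).erase n, (σ k).natAbs :=
      Finset.sum_congr rfl (fun k hk => by rw [hrest k hk])
    rw [hre, hv1, hvn]
    omega

end PruferAux

namespace PruferAux

lemma key (p : ℕ) (hp : p.Prime) (hodd : p ≠ 2) :
    ∀ N (σ : ℕ →₀ ℤ), (∀ k, N < k → 2 * (σ k).natAbs ≤ p - 1) →
    ∃ σ' : ℕ →₀ ℤ, σ' 0 = 0 ∧ (∀ k, 2 * (σ' k).natAbs ≤ p - 1) ∧
      (∑ k ∈ σ'.support, σ' k • eP p k) = (∑ k ∈ σ.support, σ k • eP p k) ∧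
      (∑ k ∈ σ'.support, (σ' k).natAbs) ≤ ∑ k ∈ σ.support, (σ k).natAbs := by
  intro N
  induction N with
  | zero =>
    intro σ hσ
    classical
    have hsub2 : (σ.erase 0).support ⊆ insert 0 σ.support := by
      rw [Finsupp.support_erase]
      exact fun k hk => Finset.mem_insert_of_mem (Finset.mem_of_mem_erase hk)
    have hsub1 : σ.support ⊆ insert 0 σ.support := Finset.subset_insert _ _
    refine ⟨σ.erase 0, Finsupp.erase_same, ?_, ?_, ?_⟩
    · intro k
      rcases eq_or_ne k 0 with rfl | h
      · rw [Finsupp.erase_same]; simp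
      · rw [Finsupp.erase_ne h]; exact hσ k (by omega)
    · rw [Finset.sum_subset hsub2
          (fun k _ hk => by rw [Finsupp.notMem_support_iff.mp hk, zero_smul]),
        Finset.sum_subset hsub1
          (fun k _ hk => by rw [Finsupp.notMem_support_iff.mp hk, zero_smul])]
      refine Finset.sum_congr rfl (fun k _ => ?_)
      rcases eq_or_ne k 0 with rfl | h
      · rw [eP_zero, smul_zero, smul_zero]
      · rw [Finsupp.erase_ne h]
    · rw [Finset.sum_subset hsub2
          (fun k _ hk => by rw [Finsupp.notMem_support_iff.mp hk, Int.natAbs_zero]),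
        Finset.sum_subset hsub1
          (fun k _ hk => by rw [Finsupp.notMem_support_iff.mp hk, Int.natAbs_zero])]
      refine Finset.sum_le_sum (fun k _ => ?_)
      rcases eq_or_ne k 0 with rfl | h
      · rw [Finsupp.erase_same]; simp
      · rw [Finsupp.erase_ne h]
  | succ N ih =>
    intro σ hσ
    by_cases hc : 2 * (σ (N+1)).natAbs ≤ p - 1
    · refine ih σ (fun k hk => ?_)
      rcases eq_or_ne k (N+1) with rfl | h
      · exact hc
      · exact hσ k (by omega)
    · obtain ⟨σ₂, hgt, hcanN, hsumeq, hably⟩ := step_lemma p hp hodd σ (N+1) (by omega) hc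
      have h2 : ∀ k, N < k → 2 * (σ₂ k).natAbs ≤ p - 1 := by
        intro k hk
        rcases eq_or_ne k (N+1) with rfl | h
        · exact hcanN
        · rw [hgt k (by omega)]; exact hσ k (by omega)
      obtain ⟨σ', h0, hcan', heq', hle'⟩ := ih σ₂ h2
      exact ⟨σ', h0, hcan', heq'.trans hsumeq, hle'.trans hably⟩

end PruferAux

namespace PruferAux

lemma coe_zsmul (c : ℤ) (x : ℚ) :
    c • ((x : ℚ) : AddCircle (1:ℚ)) = ((c • x : ℚ) : AddCircle (1:ℚ)) := by norm_cast

lemma exists_rep (p : ℕ) (hp : p.Prime) (y : Prufer p) : ∃ σ : ℕ →₀ ℤ, IsRep p y σ := by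
  obtain ⟨n, hn⟩ := y.2
  obtain ⟨q, hq⟩ : ∃ q : ℚ, (q : AddCircle (1:ℚ)) = (y : AddCircle (1:ℚ)) :=
    Quotient.exists_rep _
  have hq0 : ((p ^ n • q : ℚ) : AddCircle (1:ℚ)) = 0 := by
    have h : p ^ n • (q : AddCircle (1:ℚ)) = 0 := by rw [hq]; exact hn
    exact_mod_cast h
  obtain ⟨m, hm⟩ := (AddCircle.coe_eq_zero_iff (1:ℚ)).mp hq0
  have hm' : (m : ℚ) = (p:ℚ) ^ n * q := by
    rw [zsmul_eq_mul, mul_one] at hm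
    rw [hm, nsmul_eq_mul]
    push_cast
    ring
  have hq0' : (p:ℚ) ≠ 0 := Nat.cast_ne_zero.mpr hp.ne_zero
  have hy : y = ((p : ℤ) * m) • eP p (n+1) := by
    apply Subtype.ext
    have hcoe : (((((p:ℤ) * m) • eP p (n+1)) : Prufer p) : AddCircle (1:ℚ))
        = ((p:ℤ)*m) • ((((p:ℚ)^(n+1))⁻¹ : ℚ) : AddCircle (1:ℚ)) := rfl
    rw [hcoe, ← hq]
    rw [coe_zsmul, zsmul_eq_mul]
    congr 1
    push_cast
    field_simp
    rw [hm']
    ring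
  refine ⟨Finsupp.single (n+1) ((p:ℤ)*m), Finsupp.single_eq_of_ne' (by omega), ?_⟩
  show y = (Finsupp.single (n+1) ((p:ℤ)*m)).sum (fun k c => c • eP p k)
  exact hy.trans (Finsupp.sum_single_index (a := n+1) (b := (p:ℤ)*m)
    (h := fun k c => c • eP p k) (zero_smul ℤ _)).symm

end PruferAux

/-- Every element of `ℤ(p^∞)` (`p` odd) has a canonical form, and any representation can be
turned into a canonical one without increasing the sum of absolute values of coefficients. -/
theorem stmt8 (p : ℕ) (hp : p.Prime) (hodd : p ≠ 2) :
    (∀ y : Prufer p, ∃ σ : ℕ →₀ ℤ, IsCanonical p y σ) ∧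
    (∀ (y : Prufer p) (σ : ℕ →₀ ℤ), IsRep p y σ →
      ∃ σ' : ℕ →₀ ℤ, IsCanonical p y σ' ∧
        (∑ n ∈ σ'.support, (σ' n).natAbs) ≤ ∑ n ∈ σ.support, (σ n).natAbs) := by
  have part2 : ∀ (y : Prufer p) (σ : ℕ →₀ ℤ), IsRep p y σ →
      ∃ σ' : ℕ →₀ ℤ, IsCanonical p y σ' ∧
        (∑ n ∈ σ'.support, (σ' n).natAbs) ≤ ∑ n ∈ σ.support, (σ n).natAbs := by
    rintro y σ ⟨h0, hrep⟩
    have hbd : ∀ k, σ.support.sup id < k → 2 * (σ k).natAbs ≤ p - 1 := by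
      intro k hk
      have hz : σ k = 0 := by
        by_contra hne
        have hmem : k ∈ σ.support := Finsupp.mem_support_iff.mpr hne
        have := Finset.le_sup (f := id) hmem
        simp only [id] at this
        omega
      simp [hz]
    obtain ⟨σ', h0', hcan', heq', hle'⟩ := PruferAux.key p hp hodd (σ.support.sup id) σ hbd
    exact ⟨σ', ⟨⟨h0', hrep.trans heq'.symm⟩, hcan'⟩, hle'⟩
  refine ⟨?_, part2⟩
  intro y
  obtain ⟨σ, hσ⟩ := PruferAux.exists_rep p hp y
  obtain ⟨σ', hσ', _⟩ := part2 y σ hσ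
  exact ⟨σ', hσ'⟩
end
end
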